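/- arXiv:2209.01613 — 4 statements merged into one kernel-verified Lean document; each statement's English description precedes it below -/
import Mathlib

section
/- For all z, w in a finite-dimensional real inner product space X, V(z)/(16(1+|w|²)^{3/2}) ≤ V(z+w) − V(w) − ⟨V'(w), z⟩, where V(z) = √(1+|z|²) − 1 and V'(w) denotes the gradient of V at w. -/
noncomputable section

open scoped RealInnerProductSpace

/-- The reference integrand `V(z) := √(1+‖z‖²) − 1` on a normed space. -/
def Vfun {X : Type*} [NormedAddCommGroup X] (z : X) : ℝ :=
  Real.sqrt (1 + ‖z‖ ^ 2) - 1

private lemma le_of_sq_le_sq' (a b : ℝ) (hb : 0 ≤ b) (h : a ^ 2 ≤ b ^ 2) : a ≤ b := by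
  have h1 : a ≤ |a| := le_abs_self a
  have h2 : |a| = Real.sqrt (a ^ 2) := (Real.sqrt_sq_eq_abs a).symm
  have h3 : Real.sqrt (a ^ 2) ≤ Real.sqrt (b ^ 2) := Real.sqrt_le_sqrt h
  have h4 : Real.sqrt (b ^ 2) = b := by
    rw [Real.sqrt_sq_eq_abs, abs_of_nonneg hb]
  linarith [h2 ▸ h1, h4 ▸ h3]

private lemma key_ineq (x t c b s : ℝ) (hx : 0 ≤ x) (hc : 1 ≤ c) (hb : 0 ≤ b)
    (hb2 : b ^ 2 = c ^ 2 + x ^ 2 + 2 * t) (ht : t ^ 2 ≤ x ^ 2 * (c ^ 2 - 1))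
    (hs2 : s ^ 2 = 1 + x ^ 2) (hs : 1 ≤ s) (hs1 : s ≤ 1 + x) :
    (s - 1) / (16 * c ^ 3) ≤ b - c - t / c := by
  have hc0 : (0 : ℝ) < c := lt_of_lt_of_le one_pos hc
  have htxc : t ≤ x * c := by
    apply le_of_sq_le_sq' _ _ (mul_nonneg hx hc0.le)
    nlinarith [sq_nonneg x]
  have hbxc : b ≤ c + x := by
    apply le_of_sq_le_sq' _ _ (by linarith)
    nlinarith [htxc]
  have hbc : c ^ 2 + t ≤ b * c := by
    apply le_of_sq_le_sq' _ _ (mul_nonneg hb hc0.le)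
    have : (b * c) ^ 2 = (c ^ 2 + x ^ 2 + 2 * t) * c ^ 2 := by
      rw [mul_pow, hb2]
    nlinarith [sq_nonneg x, this]
  -- Claim B: (x² - (b-c)²) * (c*(c+x)) ≥ x²
  have hB : x ^ 2 ≤ (x ^ 2 - (b - c) ^ 2) * (c * (c + x)) := by
    have he : 0 ≤ b * c - c ^ 2 - t := by linarith
    have hprod : (b * c - c ^ 2 - t) * (b * c + c ^ 2 + t) = c ^ 2 * x ^ 2 - t ^ 2 := by
      linear_combination c ^ 2 * hb2
    have hbcc : b * c ≤ (c + x) * c := mul_le_mul_of_nonneg_right hbxc hc0.le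
    have hup : b * c + c ^ 2 + t ≤ 2 * c * (c + x) := by nlinarith [hbcc, htxc]
    have h1 : x ^ 2 ≤ c ^ 2 * x ^ 2 - t ^ 2 := by nlinarith [ht]
    have h2 : (b * c - c ^ 2 - t) * (b * c + c ^ 2 + t) ≤
        (b * c - c ^ 2 - t) * (2 * c * (c + x)) :=
      mul_le_mul_of_nonneg_left hup he
    have hD : x ^ 2 - (b - c) ^ 2 = 2 * (b * c - c ^ 2 - t) := by
      linear_combination -hb2
    rw [hD]
    calc x ^ 2 ≤ c ^ 2 * x ^ 2 - t ^ 2 := h1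
      _ = (b * c - c ^ 2 - t) * (b * c + c ^ 2 + t) := hprod.symm
      _ ≤ (b * c - c ^ 2 - t) * (2 * c * (c + x)) := h2
      _ = 2 * (b * c - c ^ 2 - t) * (c * (c + x)) := by ring
  have key2 : b - c - t / c = (x ^ 2 - (b - c) ^ 2) / (2 * c) := by
    rw [eq_div_iff (by positivity : (2 : ℝ) * c ≠ 0)]
    field_simp
    linear_combination hb2
  rw [key2, div_le_div_iff₀ (by positivity) (by positivity)]
  -- goal : (s - 1) * (2 * c) ≤ (x² - (b-c)²) * (16 * c³)
  have hs0 : 0 ≤ s - 1 := by linarith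
  have hsx2 : s - 1 ≤ x ^ 2 / 2 := by nlinarith [hs0]
  have hsx : s - 1 ≤ x := by linarith
  have ha : c * (s - 1) ≤ c * (x ^ 2 / 2) := mul_le_mul_of_nonneg_left hsx2 hc0.le
  have hb' : x * (s - 1) ≤ x * x := mul_le_mul_of_nonneg_left hsx hx
  have hcx2 : x ^ 2 ≤ c * x ^ 2 := by nlinarith [sq_nonneg x]
  have h8 : (c + x) * (s - 1) ≤ 8 * c * x ^ 2 := by nlinarith [ha, hb', hcx2]
  have hcx : (0 : ℝ) < c * (c + x) := by positivity
  rw [← mul_le_mul_iff_of_pos_right hcx]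
  calc (s - 1) * (2 * c) * (c * (c + x)) = 2 * c ^ 2 * ((c + x) * (s - 1)) := by ring
    _ ≤ 2 * c ^ 2 * (8 * c * x ^ 2) := by
        apply mul_le_mul_of_nonneg_left h8 (by positivity)
    _ = 16 * c ^ 3 * x ^ 2 := by ring
    _ ≤ 16 * c ^ 3 * ((x ^ 2 - (b - c) ^ 2) * (c * (c + x))) := by
        apply mul_le_mul_of_nonneg_left hB (by positivity)
    _ = (x ^ 2 - (b - c) ^ 2) * (16 * c ^ 3) * (c * (c + x)) := by ring

/-- For all `z, w` in a finite-dimensional real inner product space,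
`V(z)/(16(1+‖w‖²)^{3/2}) ≤ V(z+w) − V(w) − ⟨V'(w), z⟩`, where
`V'(w) = w/√(1+‖w‖²)` is the gradient of `V` at `w`. -/
theorem Vfun_shift_lower_bound {X : Type*} [NormedAddCommGroup X]
    [InnerProductSpace ℝ X] [FiniteDimensional ℝ X] (z w : X) :
    Vfun z / (16 * (1 + ‖w‖ ^ 2) ^ ((3 : ℝ) / 2)) ≤
      Vfun (z + w) - Vfun w - ⟪(Real.sqrt (1 + ‖w‖ ^ 2))⁻¹ • w, z⟫ := by
  set x : ℝ := ‖z‖ with hxdef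
  set t : ℝ := ⟪w, z⟫ with htdef
  set c : ℝ := Real.sqrt (1 + ‖w‖ ^ 2) with hcdef
  set b : ℝ := Real.sqrt (1 + ‖z + w‖ ^ 2) with hbdef
  set s : ℝ := Real.sqrt (1 + ‖z‖ ^ 2) with hsdef
  have hwpos : (0:ℝ) ≤ 1 + ‖w‖ ^ 2 := by positivity
  have hc2 : c ^ 2 = 1 + ‖w‖ ^ 2 := Real.sq_sqrt hwpos
  have hb2' : b ^ 2 = 1 + ‖z + w‖ ^ 2 := Real.sq_sqrt (by positivity)
  have hs2' : s ^ 2 = 1 + ‖z‖ ^ 2 := Real.sq_sqrt (by positivity)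
  have hc0 : 0 ≤ c := Real.sqrt_nonneg _
  have hs0 : 0 ≤ s := Real.sqrt_nonneg _
  have hb0 : 0 ≤ b := Real.sqrt_nonneg _
  have hc1 : 1 ≤ c := by nlinarith [hc2, sq_nonneg ‖w‖]
  have hs1 : 1 ≤ s := by nlinarith [hs2', sq_nonneg ‖z‖]
  have hsx : s ≤ 1 + x := by
    apply le_of_sq_le_sq' _ _ (by positivity)
    rw [hs2']
    nlinarith [norm_nonneg z]
  have hzw : ⟪z, w⟫ = t := (real_inner_comm z w).symm
  have hnormadd : ‖z + w‖ ^ 2 = ‖z‖ ^ 2 + 2 * ⟪z, w⟫ + ‖w‖ ^ 2 := norm_add_sq_real z w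
  have hb2 : b ^ 2 = c ^ 2 + x ^ 2 + 2 * t := by
    rw [hb2', hc2, hnormadd, hzw]; ring
  have hcs : t ^ 2 ≤ x ^ 2 * (c ^ 2 - 1) := by
    have h : |t| ≤ ‖w‖ * ‖z‖ := abs_real_inner_le_norm w z
    have h2 : t ^ 2 ≤ (‖w‖ * ‖z‖) ^ 2 := by
      have := abs_nonneg t
      nlinarith [sq_abs t]
    calc t ^ 2 ≤ (‖w‖ * ‖z‖) ^ 2 := h2
      _ = x ^ 2 * (c ^ 2 - 1) := by rw [hc2]; ring
  have hinner : ⟪c⁻¹ • w, z⟫ = t / c := by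
    rw [real_inner_smul_left, div_eq_inv_mul]
  have hrpow : (1 + ‖w‖ ^ 2) ^ ((3 : ℝ) / 2) = c ^ 3 := by
    rw [← hc2, ← Real.rpow_natCast c 3, ← Real.rpow_natCast c 2,
      ← Real.rpow_mul hc0]
    norm_num
  have hs2 : s ^ 2 = 1 + x ^ 2 := hs2'
  have key := key_ineq x t c b s (norm_nonneg z) hc1 hb0 hb2 hcs hs2 hs1 hsx
  have hVz : Vfun z = s - 1 := rfl
  have hVzw : Vfun (z + w) = b - 1 := rfl
  have hVw : Vfun w = c - 1 := rfl
  rw [hVz, hVzw, hVw, hrpow, hinner]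
  linarith [key]
end
end

section
/- For each 1 < p < ∞ there exists a constant c = c(p) > 0 such that for all z, z' ∈ ℝ^{N×n}: (1/c)(1+|z|²+|z'|²)^{(p−2)/2}|z'|² ≤ V_p(z+z') − V_p(z) − ⟨V_p'(z), z'⟩ ≤ c(1+|z|²+|z'|²)^{(p−2)/2}|z'|², where V_p(z) = (1+|z|²)^{p/2} − 1. -/
noncomputable section

open scoped RealInnerProductSpace

/-- `V_p(z) = (1+|z|²)^{p/2} − 1` on `ℝ^{N×n}` with the Hilbert–Schmidt inner product
(modelled as `EuclideanSpace ℝ (Fin N × Fin n)`). -/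
def Vp {N n : ℕ} (p : ℝ) (z : EuclideanSpace ℝ (Fin N × Fin n)) : ℝ :=
  (1 + ‖z‖ ^ 2) ^ (p / 2) - 1


namespace VpTaylorAux

open MeasureTheory intervalIntegral

variable {p A B C : ℝ}


variable {p A B C : ℝ}

lemma kpos (hA : 0 ≤ A) (hB : 0 ≤ B) (hC : C ^ 2 ≤ A * B) (t : ℝ) :
    0 < 1 + A + 2 * C * t + B * t ^ 2 := by
  rcases eq_or_lt_of_le hB with h | h
  · have hC0 : C = 0 := by nlinarith [sq_nonneg C]
    rw [hC0, ← h]; nlinarith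
  · nlinarith [sq_nonneg (C + B * t)]

lemma cauchy_pt (hB : 0 ≤ B) (hC : C ^ 2 ≤ A * B) (t : ℝ) :
    (C + B * t) ^ 2 ≤ (1 + A + 2 * C * t + B * t ^ 2) * B := by
  nlinarith [sq_nonneg (B*t)]


lemma hk (A B C t : ℝ) : HasDerivAt (fun s => 1 + A + 2 * C * s + B * s ^ 2)
    (2 * C + 2 * B * t) t := by
  have h1 : HasDerivAt (fun s : ℝ => 1 + A + 2 * C * s + B * s ^ 2)
      (0 + 2 * C * 1 + B * (2 * t ^ 1)) t := by
    exact ((hasDerivAt_const t (1 + A)).add ((hasDerivAt_id t).const_mul (2*C))).add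
      ((hasDerivAt_pow 2 t).const_mul B)
  convert h1 using 1; ring

lemma hphi (p A B C : ℝ) (hA : 0 ≤ A) (hB : 0 ≤ B) (hC : C ^ 2 ≤ A * B) (t : ℝ) :
    HasDerivAt (fun s => (1 + A + 2 * C * s + B * s ^ 2) ^ (p/2))
      (p/2 * (1 + A + 2 * C * t + B * t ^ 2) ^ (p/2 - 1) * (2 * C + 2 * B * t)) t := by
  have h := (Real.hasDerivAt_rpow_const (p := p/2)
    (Or.inl (kpos hA hB hC t).ne')).comp t (hk A B C t)
  exact h.congr_deriv (by ring)

lemma hphi2 (p A B C : ℝ) (hA : 0 ≤ A) (hB : 0 ≤ B) (hC : C ^ 2 ≤ A * B) (t : ℝ) :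
    HasDerivAt (fun s => p/2 * (1 + A + 2 * C * s + B * s ^ 2) ^ (p/2 - 1) * (2 * C + 2 * B * s))
      (p * (p-2) * (1 + A + 2 * C * t + B * t ^ 2) ^ (p/2 - 2) * (C + B*t) ^ 2
        + p * B * (1 + A + 2 * C * t + B * t ^ 2) ^ (p/2 - 1)) t := by
  have h1 : HasDerivAt (fun s => (1 + A + 2 * C * s + B * s ^ 2) ^ (p/2 - 1))
      ((p/2 - 1) * (1 + A + 2 * C * t + B * t ^ 2) ^ (p/2 - 1 - 1) * (2 * C + 2 * B * t)) t := by
    have h := (Real.hasDerivAt_rpow_const (p := p/2 - 1)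
      (Or.inl (kpos hA hB hC t).ne')).comp t (hk A B C t)
    exact h.congr_deriv (by ring)
  have hl : HasDerivAt (fun s : ℝ => 2 * C + 2 * B * s) (2 * B) t := by
    simpa using ((hasDerivAt_id t).const_mul (2*B)).const_add (2*C)
  have h2 := ((h1.const_mul (p/2)).mul hl)
  refine h2.congr_deriv ?_
  have h3 : p/2 - 1 - 1 = p/2 - 2 := by ring
  rw [h3]; ring


lemma contPhi2 (p A B C : ℝ) (hA : 0 ≤ A) (hB : 0 ≤ B) (hC : C ^ 2 ≤ A * B) :
    Continuous (fun t => (1 - t) * (p * (p-2) * (1 + A + 2 * C * t + B * t ^ 2) ^ (p/2 - 2) * (C + B*t) ^ 2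
        + p * B * (1 + A + 2 * C * t + B * t ^ 2) ^ (p/2 - 1))) := by
  have hk : Continuous (fun t : ℝ => 1 + A + 2 * C * t + B * t ^ 2) := by continuity
  exact (continuous_const.sub continuous_id).mul
    ((((continuous_const.mul (hk.rpow_const (fun t => Or.inl (kpos hA hB hC t).ne'))).mul
      ((continuous_const.add (continuous_const.mul continuous_id)).pow 2)).add
      (continuous_const.mul (hk.rpow_const (fun t => Or.inl (kpos hA hB hC t).ne')))))

lemma taylor_rep (p A B C : ℝ) (hA : 0 ≤ A) (hB : 0 ≤ B) (hC : C ^ 2 ≤ A * B) :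
    (1 + A + 2*C + B) ^ (p/2) - (1 + A) ^ (p/2) - p/2 * (1 + A) ^ (p/2 - 1) * (2*C)
      = ∫ t in (0:ℝ)..1, (1 - t) *
          (p * (p-2) * (1 + A + 2 * C * t + B * t ^ 2) ^ (p/2 - 2) * (C + B*t) ^ 2
            + p * B * (1 + A + 2 * C * t + B * t ^ 2) ^ (p/2 - 1)) := by
  set Φ : ℝ → ℝ := fun t => p * (p-2) * (1 + A + 2 * C * t + B * t ^ 2) ^ (p/2 - 2) * (C + B*t) ^ 2
            + p * B * (1 + A + 2 * C * t + B * t ^ 2) ^ (p/2 - 1) with hΦ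
  set ψ : ℝ → ℝ := fun t => (1 + A + 2*C + B) ^ (p/2) - (1 + A + 2 * C * t + B * t ^ 2) ^ (p/2)
      - (1 - t) * (p/2 * (1 + A + 2 * C * t + B * t ^ 2) ^ (p/2 - 1) * (2 * C + 2 * B * t)) with hψ
  have hψd : ∀ t : ℝ, HasDerivAt ψ (-((1 - t) * Φ t)) t := by
    intro t
    have h1 : HasDerivAt (fun s : ℝ => (1:ℝ) - s) (-1) t := by
      simpa using (hasDerivAt_id t).const_sub 1
    have h2 := ((hasDerivAt_const t ((1 + A + 2*C + B) ^ (p/2))).sub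
      (hphi p A B C hA hB hC t)).sub (h1.mul (hphi2 p A B C hA hB hC t))
    refine h2.congr_deriv ?_
    rw [hΦ]; ring
  have hint : IntervalIntegrable (fun t => -((1 - t) * Φ t)) MeasureTheory.volume 0 1 :=
    ((contPhi2 p A B C hA hB hC).neg).intervalIntegrable 0 1
  have := intervalIntegral.integral_eq_sub_of_hasDerivAt (fun t _ => hψd t) hint
  rw [intervalIntegral.integral_neg] at this
  have hψ1 : ψ 1 = (1 + A + 2*C + B) ^ (p/2) - (1 + A + 2*C*1 + B*1^2) ^ (p/2) := by
    rw [hψ]; ring_nf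
  have hψ0 : ψ 0 = (1 + A + 2*C + B) ^ (p/2) - (1 + A + 2*C*0 + B*0^2) ^ (p/2)
      - (p/2 * (1 + A + 2*C*0 + B*0^2) ^ (p/2 - 1) * (2*C)) := by
    rw [hψ]; ring_nf
  have e1 : (1:ℝ) + A + 2*C*1 + B*1^2 = 1 + A + 2*C + B := by ring
  have e0 : (1:ℝ) + A + 2*C*0 + B*0^2 = 1 + A := by ring
  rw [e1] at hψ1
  rw [e0] at hψ0
  have : ∫ t in (0:ℝ)..1, (1 - t) * Φ t = ψ 0 - ψ 1 := by linarith
  rw [this, hψ0, hψ1]; ring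



variable {p A B C : ℝ}


lemma Phi_bounds (hp : 1 < p) (hA : 0 ≤ A) (hB : 0 ≤ B) (hC : C ^ 2 ≤ A * B) (t : ℝ) :
    p * min 1 (p-1) * B * (1 + A + 2 * C * t + B * t ^ 2) ^ (p/2 - 1) ≤
      p * (p-2) * (1 + A + 2 * C * t + B * t ^ 2) ^ (p/2 - 2) * (C + B*t) ^ 2
        + p * B * (1 + A + 2 * C * t + B * t ^ 2) ^ (p/2 - 1) ∧
    p * (p-2) * (1 + A + 2 * C * t + B * t ^ 2) ^ (p/2 - 2) * (C + B*t) ^ 2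
        + p * B * (1 + A + 2 * C * t + B * t ^ 2) ^ (p/2 - 1) ≤
      p * max 1 (p-1) * B * (1 + A + 2 * C * t + B * t ^ 2) ^ (p/2 - 1) := by
  set r := 1 + A + 2 * C * t + B * t ^ 2 with hr
  have hrpos : 0 < r := kpos hA hB hC t
  have hS : (C + B*t) ^ 2 ≤ r * B := cauchy_pt hB hC t
  have hS0 : 0 ≤ (C + B*t) ^ 2 := sq_nonneg _
  have hX2 : 0 ≤ r ^ (p/2 - 2) := (Real.rpow_pos_of_pos hrpos _).le
  have hX1 : 0 ≤ r ^ (p/2 - 1) := (Real.rpow_pos_of_pos hrpos _).le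
  have e2 : r ^ (p/2 - 2) * r = r ^ (p/2 - 1) := by
    rw [← Real.rpow_add_one hrpos.ne' (p/2 - 2)]
    congr 1; ring
  have hp0 : 0 < p := by linarith
  rcases le_or_gt 2 p with h2 | h2
  · rw [min_eq_left (by linarith), max_eq_right (by linarith)]
    constructor
    · nlinarith [mul_nonneg (mul_nonneg (mul_nonneg hp0.le (by linarith : (0:ℝ) ≤ p - 2)) hX2) hS0]
    · have key : p * (p-2) * r ^ (p/2-2) * (C + B*t)^2 ≤ p * (p-2) * r ^ (p/2-2) * (r * B) :=
        mul_le_mul_of_nonneg_left hS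
          (mul_nonneg (mul_nonneg hp0.le (by linarith)) hX2)
      have key2 : p * (p-2) * r ^ (p/2-2) * (C + B*t)^2 ≤ p * (p-2) * B * r ^ (p/2-1) := by
        calc p * (p-2) * r ^ (p/2-2) * (C + B*t)^2 ≤ p * (p-2) * r ^ (p/2-2) * (r * B) := key
        _ = p * (p-2) * B * (r ^ (p/2-2) * r) := by ring
        _ = p * (p-2) * B * r ^ (p/2-1) := by rw [e2]
      nlinarith [key2]
  · rw [min_eq_right (by linarith), max_eq_left (by linarith)]
    constructor
    · have key : p * (2-p) * r ^ (p/2-2) * (C + B*t)^2 ≤ p * (2-p) * r ^ (p/2-2) * (r * B) :=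
        mul_le_mul_of_nonneg_left hS
          (mul_nonneg (mul_nonneg hp0.le (by linarith)) hX2)
      have key2 : p * (2-p) * r ^ (p/2-2) * (C + B*t)^2 ≤ p * (2-p) * B * r ^ (p/2-1) := by
        calc p * (2-p) * r ^ (p/2-2) * (C + B*t)^2 ≤ p * (2-p) * r ^ (p/2-2) * (r * B) := key
        _ = p * (2-p) * B * (r ^ (p/2-2) * r) := by ring
        _ = p * (2-p) * B * r ^ (p/2-1) := by rw [e2]
      nlinarith [key2]
    · nlinarith [mul_nonneg (mul_nonneg (mul_nonneg hp0.le (by linarith : (0:ℝ) ≤ 2 - p)) hX2) hS0]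



variable {p A B C : ℝ}

lemma k_le (hA : 0 ≤ A) (hB : 0 ≤ B) (hC : C ^ 2 ≤ A * B) {t : ℝ} (ht0 : 0 ≤ t) (ht1 : t ≤ 1) :
    1 + A + 2 * C * t + B * t ^ 2 ≤ 2 * (1 + A + B) := by
  rcases le_or_gt (C*t) 0 with h | h
  · nlinarith [mul_nonneg hB (mul_nonneg ht0 ht0), mul_le_mul_of_nonneg_left
      (mul_le_one₀ ht1 ht0 ht1) hB]
  · have h' : 0 < A + B + 2*(C*t) := by nlinarith
    nlinarith [mul_le_mul_of_nonneg_right hC (mul_nonneg ht0 ht0),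
      mul_le_mul_of_nonneg_left (mul_le_one₀ ht1 ht0 ht1) (mul_nonneg hA hB),
      sq_nonneg (A - B), mul_le_mul_of_nonneg_left (mul_le_one₀ ht1 ht0 ht1) hB, h']

lemma k_ge_one (hA : 0 ≤ A) (hB : 0 ≤ B) (hC : C ^ 2 ≤ A * B) (t : ℝ) :
    1 ≤ 1 + A + 2 * C * t + B * t ^ 2 := by
  rcases eq_or_lt_of_le hB with h | h
  · have hC0 : C = 0 := by nlinarith [sq_nonneg C]
    rw [hC0, ← h]; nlinarith
  · nlinarith [sq_nonneg (C + B * t)]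

lemma k_ge (hA : 0 ≤ A) (hB : 0 ≤ B) (hC : C ^ 2 ≤ A * B) (h9 : 9 * B ≤ A)
    {t : ℝ} (ht0 : 0 ≤ t) (ht1 : t ≤ 1) :
    2/5 * (1 + A + B) ≤ 1 + A + 2 * C * t + B * t ^ 2 := by
  have f0 : 0 ≤ 5*A/9 + 2*C*t + B*t^2 := by
    rcases eq_or_lt_of_le hB with h | h
    · have hC0 : C = 0 := by nlinarith [sq_nonneg C]
      rw [hC0, ← h]; nlinarith
    · nlinarith [sq_nonneg (C + 3*B*t), mul_le_mul_of_nonneg_left (mul_le_one₀ ht1 ht0 ht1) (sq_nonneg B), mul_nonneg h.le (mul_nonneg ht0 ht0), mul_le_mul_of_nonneg_left h9 h.le]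
  linarith



open MeasureTheory intervalIntegral

variable {p A B C : ℝ}


lemma contk (A B C : ℝ) (hA : 0 ≤ A) (hB : 0 ≤ B) (hC : C ^ 2 ≤ A * B) (e : ℝ) :
    Continuous (fun t : ℝ => (1 + A + 2 * C * t + B * t ^ 2) ^ e) := by
  have hk : Continuous (fun t : ℝ => 1 + A + 2 * C * t + B * t ^ 2) := by continuity
  exact hk.rpow_const (fun t => Or.inl (kpos hA hB hC t).ne')

lemma int_one_sub (c : ℝ) : ∫ t in (0:ℝ)..1, (1 - t) * c = c / 2 := by
  have h1 : IntervalIntegrable (fun _ : ℝ => c) volume 0 1 := intervalIntegrable_const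
  have h2 : IntervalIntegrable (fun t : ℝ => t * c) volume 0 1 :=
    (intervalIntegral.intervalIntegrable_id).mul_const c
  have : (fun t : ℝ => (1 - t) * c) = fun t : ℝ => c - t * c := by funext t; ring
  rw [this, intervalIntegral.integral_sub h1 h2, intervalIntegral.integral_mul_const,
    integral_id, intervalIntegral.integral_const]
  norm_num
  ring

lemma S_pos (hA : 0 ≤ A) (hB : 0 ≤ B) : (0:ℝ) < 1 + A + B := by linarith

lemma Jub_hi (hp2 : 2 ≤ p) (hA : 0 ≤ A) (hB : 0 ≤ B) (hC : C ^ 2 ≤ A * B) :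
    (∫ t in (0:ℝ)..1, (1 - t) * (1 + A + 2 * C * t + B * t ^ 2) ^ (p/2-1))
      ≤ (1/2) * 2 ^ (p/2-1) * (1 + A + B) ^ (p/2-1) := by
  have hq : (0:ℝ) ≤ p/2 - 1 := by linarith
  have hmono : ∀ t ∈ Set.Icc (0:ℝ) 1,
      (1 - t) * (1 + A + 2 * C * t + B * t ^ 2) ^ (p/2-1)
        ≤ (1 - t) * (2 * (1 + A + B)) ^ (p/2-1) := by
    intro t ht
    have := Real.rpow_le_rpow (kpos hA hB hC t).le (k_le hA hB hC ht.1 ht.2) hq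
    exact mul_le_mul_of_nonneg_left this (by linarith [ht.2])
  have h := intervalIntegral.integral_mono_on (by norm_num : (0:ℝ) ≤ 1)
    (((continuous_const.sub continuous_id).mul (contk A B C hA hB hC _)).intervalIntegrable (μ := volume) 0 1)
    (((continuous_const.sub continuous_id).mul continuous_const).intervalIntegrable (μ := volume) 0 1) hmono
  calc (∫ t in (0:ℝ)..1, (1 - t) * (1 + A + 2 * C * t + B * t ^ 2) ^ (p/2-1))
      ≤ ∫ t in (0:ℝ)..1, (1 - t) * (2 * (1 + A + B)) ^ (p/2-1) := h
    _ = (2 * (1 + A + B)) ^ (p/2-1) / 2 := int_one_sub _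
    _ = (1/2) * 2 ^ (p/2-1) * (1 + A + B) ^ (p/2-1) := by
        rw [Real.mul_rpow (by norm_num) (S_pos hA hB).le]; ring

lemma Jlb_lo (hp2 : p ≤ 2) (hA : 0 ≤ A) (hB : 0 ≤ B) (hC : C ^ 2 ≤ A * B) :
    (1/2) * 2 ^ (p/2-1) * (1 + A + B) ^ (p/2-1)
      ≤ ∫ t in (0:ℝ)..1, (1 - t) * (1 + A + 2 * C * t + B * t ^ 2) ^ (p/2-1) := by
  have hq : p/2 - 1 ≤ 0 := by linarith
  have hmono : ∀ t ∈ Set.Icc (0:ℝ) 1,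
      (1 - t) * (2 * (1 + A + B)) ^ (p/2-1)
        ≤ (1 - t) * (1 + A + 2 * C * t + B * t ^ 2) ^ (p/2-1) := by
    intro t ht
    have := Real.rpow_le_rpow_of_nonpos (kpos hA hB hC t) (k_le hA hB hC ht.1 ht.2) hq
    exact mul_le_mul_of_nonneg_left this (by linarith [ht.2])
  have h := intervalIntegral.integral_mono_on (by norm_num : (0:ℝ) ≤ 1)
    (((continuous_const.sub continuous_id).mul continuous_const).intervalIntegrable (μ := volume) 0 1)
    (((continuous_const.sub continuous_id).mul (contk A B C hA hB hC _)).intervalIntegrable (μ := volume) 0 1) hmono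
  calc (1/2) * 2 ^ (p/2-1) * (1 + A + B) ^ (p/2-1)
      = (2 * (1 + A + B)) ^ (p/2-1) / 2 := by
        rw [Real.mul_rpow (by norm_num) (S_pos hA hB).le]; ring
    _ = ∫ t in (0:ℝ)..1, (1 - t) * (2 * (1 + A + B)) ^ (p/2-1) := (int_one_sub _).symm
    _ ≤ _ := h

lemma Jlb_92 (hp2 : 2 ≤ p) (hA : 0 ≤ A) (hB : 0 ≤ B) (hC : C ^ 2 ≤ A * B) (h9 : 9 * B ≤ A) :
    (1/2) * (2/5) ^ (p/2-1) * (1 + A + B) ^ (p/2-1)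
      ≤ ∫ t in (0:ℝ)..1, (1 - t) * (1 + A + 2 * C * t + B * t ^ 2) ^ (p/2-1) := by
  have hq : (0:ℝ) ≤ p/2 - 1 := by linarith
  have hmono : ∀ t ∈ Set.Icc (0:ℝ) 1,
      (1 - t) * (2/5 * (1 + A + B)) ^ (p/2-1)
        ≤ (1 - t) * (1 + A + 2 * C * t + B * t ^ 2) ^ (p/2-1) := by
    intro t ht
    have := Real.rpow_le_rpow (by positivity) (k_ge hA hB hC h9 ht.1 ht.2) hq
    exact mul_le_mul_of_nonneg_left this (by linarith [ht.2])
  have h := intervalIntegral.integral_mono_on (by norm_num : (0:ℝ) ≤ 1)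
    (((continuous_const.sub continuous_id).mul continuous_const).intervalIntegrable (μ := volume) 0 1)
    (((continuous_const.sub continuous_id).mul (contk A B C hA hB hC _)).intervalIntegrable (μ := volume) 0 1) hmono
  calc (1/2) * (2/5) ^ (p/2-1) * (1 + A + B) ^ (p/2-1)
      = (2/5 * (1 + A + B)) ^ (p/2-1) / 2 := by
        rw [Real.mul_rpow (by norm_num) (S_pos hA hB).le]; ring
    _ = ∫ t in (0:ℝ)..1, (1 - t) * (2/5 * (1 + A + B)) ^ (p/2-1) := (int_one_sub _).symm
    _ ≤ _ := h

lemma Jub_92 (hp2 : p ≤ 2) (hA : 0 ≤ A) (hB : 0 ≤ B) (hC : C ^ 2 ≤ A * B) (h9 : 9 * B ≤ A) :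
    (∫ t in (0:ℝ)..1, (1 - t) * (1 + A + 2 * C * t + B * t ^ 2) ^ (p/2-1))
      ≤ (1/2) * (2/5) ^ (p/2-1) * (1 + A + B) ^ (p/2-1) := by
  have hq : p/2 - 1 ≤ 0 := by linarith
  have hmono : ∀ t ∈ Set.Icc (0:ℝ) 1,
      (1 - t) * (1 + A + 2 * C * t + B * t ^ 2) ^ (p/2-1)
        ≤ (1 - t) * (2/5 * (1 + A + B)) ^ (p/2-1) := by
    intro t ht
    have := Real.rpow_le_rpow_of_nonpos (by positivity) (k_ge hA hB hC h9 ht.1 ht.2) hq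
    exact mul_le_mul_of_nonneg_left this (by linarith [ht.2])
  have h := intervalIntegral.integral_mono_on (by norm_num : (0:ℝ) ≤ 1)
    (((continuous_const.sub continuous_id).mul (contk A B C hA hB hC _)).intervalIntegrable (μ := volume) 0 1)
    (((continuous_const.sub continuous_id).mul continuous_const).intervalIntegrable (μ := volume) 0 1) hmono
  calc (∫ t in (0:ℝ)..1, (1 - t) * (1 + A + 2 * C * t + B * t ^ 2) ^ (p/2-1))
      ≤ ∫ t in (0:ℝ)..1, (1 - t) * (2/5 * (1 + A + B)) ^ (p/2-1) := h
    _ = (2/5 * (1 + A + B)) ^ (p/2-1) / 2 := int_one_sub _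
    _ = (1/2) * (2/5) ^ (p/2-1) * (1 + A + B) ^ (p/2-1) := by
        rw [Real.mul_rpow (by norm_num) (S_pos hA hB).le]; ring



open MeasureTheory intervalIntegral

variable {p A B C : ℝ}


lemma Jlb_sub (hp2 : 2 ≤ p) (hA : 0 ≤ A) (hB : 0 ≤ B) (hC : C ^ 2 ≤ A * B)
    (a b : ℝ) (h0a : 0 ≤ a) (hab : a ≤ b) (hb : b ≤ 1/2) (hlen : b - a = 1/8)
    (hk : ∀ t ∈ Set.Icc a b, (1 + A + B)/640 ≤ 1 + A + 2*C*t + B*t^2) :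
    (1/16) * (1/640) ^ (p/2-1) * (1 + A + B) ^ (p/2-1)
      ≤ ∫ t in (0:ℝ)..1, (1 - t) * (1 + A + 2 * C * t + B * t ^ 2) ^ (p/2-1) := by
  have hq : (0:ℝ) ≤ p/2 - 1 := by linarith
  have hS := S_pos hA hB
  have hcont : Continuous (fun t : ℝ => (1 - t) * (1 + A + 2 * C * t + B * t ^ 2) ^ (p/2-1)) :=
    (continuous_const.sub continuous_id).mul (contk A B C hA hB hC _)
  have hi1 : IntervalIntegrable (fun t : ℝ => (1 - t) * (1 + A + 2 * C * t + B * t ^ 2) ^ (p/2-1))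
      volume 0 a := hcont.intervalIntegrable 0 a
  have hi2 : IntervalIntegrable (fun t : ℝ => (1 - t) * (1 + A + 2 * C * t + B * t ^ 2) ^ (p/2-1))
      volume a b := hcont.intervalIntegrable a b
  have hi3 : IntervalIntegrable (fun t : ℝ => (1 - t) * (1 + A + 2 * C * t + B * t ^ 2) ^ (p/2-1))
      volume b 1 := hcont.intervalIntegrable b 1
  have hsplit : (∫ t in (0:ℝ)..1, (1 - t) * (1 + A + 2 * C * t + B * t ^ 2) ^ (p/2-1))
      = (∫ t in (0:ℝ)..a, (1 - t) * (1 + A + 2 * C * t + B * t ^ 2) ^ (p/2-1))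
      + ((∫ t in a..b, (1 - t) * (1 + A + 2 * C * t + B * t ^ 2) ^ (p/2-1))
      + ∫ t in b..(1:ℝ), (1 - t) * (1 + A + 2 * C * t + B * t ^ 2) ^ (p/2-1)) := by
    rw [integral_add_adjacent_intervals hi2 hi3, integral_add_adjacent_intervals hi1 (hi2.trans hi3)]
  have hnn1 : 0 ≤ ∫ t in (0:ℝ)..a, (1 - t) * (1 + A + 2 * C * t + B * t ^ 2) ^ (p/2-1) := by
    apply intervalIntegral.integral_nonneg h0a
    intro u hu
    have : u ≤ 1 := by rcases hu with ⟨_, h⟩; linarith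
    exact mul_nonneg (by linarith) (Real.rpow_nonneg (kpos hA hB hC u).le _)
  have hnn3 : 0 ≤ ∫ t in b..(1:ℝ), (1 - t) * (1 + A + 2 * C * t + B * t ^ 2) ^ (p/2-1) := by
    apply intervalIntegral.integral_nonneg (by linarith)
    intro u hu
    exact mul_nonneg (by rcases hu with ⟨_, h⟩; linarith)
      (Real.rpow_nonneg (kpos hA hB hC u).le _)
  have hmid : (b - a) • ((1/2) * ((1 + A + B)/640) ^ (p/2-1))
      ≤ ∫ t in a..b, (1 - t) * (1 + A + 2 * C * t + B * t ^ 2) ^ (p/2-1) := by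
    rw [← intervalIntegral.integral_const]
    apply intervalIntegral.integral_mono_on hab
      (intervalIntegrable_const) (hcont.intervalIntegrable a b)
    intro t ht
    have ht1 : t ≤ 1/2 := le_trans ht.2 hb
    have ht0 : 0 ≤ t := le_trans h0a ht.1
    have h1 : ((1 + A + B)/640) ^ (p/2-1) ≤ (1 + A + 2*C*t + B*t^2) ^ (p/2-1) :=
      Real.rpow_le_rpow (by positivity) (hk t ht) hq
    have h2 : (1/2 : ℝ) ≤ 1 - t := by linarith
    calc (1/2) * ((1 + A + B)/640) ^ (p/2-1)
        ≤ (1 - t) * ((1 + A + B)/640) ^ (p/2-1) :=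
          mul_le_mul_of_nonneg_right h2 (Real.rpow_nonneg (by positivity) _)
      _ ≤ (1 - t) * (1 + A + 2*C*t + B*t^2) ^ (p/2-1) :=
          mul_le_mul_of_nonneg_left h1 (by linarith)
  have heq : (b - a) • ((1/2) * ((1 + A + B)/640) ^ (p/2-1))
      = (1/16) * (1/640) ^ (p/2-1) * (1 + A + B) ^ (p/2-1) := by
    have : (1 + A + B)/640 = (1/640) * (1 + A + B) := by ring
    rw [smul_eq_mul, hlen, this, Real.mul_rpow (by norm_num) hS.le]
    ring
  rw [hsplit]
  rw [heq] at hmid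
  linarith

lemma Jlb_case3 (hp2 : 2 ≤ p) (hA : 0 ≤ A) (hB : 0 ≤ B) (hC : C ^ 2 ≤ A * B) (h9 : A < 9 * B) :
    (1/16) * (1/640) ^ (p/2-1) * (1 + A + B) ^ (p/2-1)
      ≤ ∫ t in (0:ℝ)..1, (1 - t) * (1 + A + 2 * C * t + B * t ^ 2) ^ (p/2-1) := by
  have hBpos : 0 < B := by linarith
  have key : ∀ t : ℝ, B^2/64 ≤ (C + B*t)^2 → (1 + A + B)/640 ≤ 1 + A + 2*C*t + B*t^2 := by
    intro t hsq
    have h1 : (C + B*t)^2 ≤ (A + 2*C*t + B*t^2) * B := by nlinarith [hC]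
    have h2 : (B/64) * B ≤ (A + 2*C*t + B*t^2) * B := by nlinarith
    have h3 : B/64 ≤ A + 2*C*t + B*t^2 := le_of_mul_le_mul_right h2 hBpos
    linarith
  rcases le_or_gt C (-(B/4)) with hc | hc
  · apply Jlb_sub hp2 hA hB hC 0 (1/8) le_rfl (by norm_num) (by norm_num) (by norm_num)
    intro t ht
    apply key
    have h1 : C + B*t ≤ -(B/8) := by nlinarith [ht.1, ht.2, hBpos]
    nlinarith [h1, hBpos]
  · apply Jlb_sub hp2 hA hB hC (3/8) (1/2) (by norm_num) (by norm_num) (by norm_num) (by norm_num)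
    intro t ht
    apply key
    have h1 : B/8 ≤ C + B*t := by nlinarith [ht.1, ht.2, hBpos]
    nlinarith [h1, hBpos]



open MeasureTheory intervalIntegral

variable {p A B C : ℝ}


lemma Jub_case4a (hp1 : 1 < p) (hp2 : p ≤ 2) (hA : 0 ≤ A) (hB : 0 ≤ B) (hC : C ^ 2 ≤ A * B)
    (h9 : A < 9 * B) (hB1 : B ≤ 1) :
    (∫ t in (0:ℝ)..1, (1 - t) * (1 + A + 2 * C * t + B * t ^ 2) ^ (p/2-1))
      ≤ (1/2) * (11:ℝ) ^ (-(p/2-1)) * (1 + A + B) ^ (p/2-1) := by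
  have hq : p/2 - 1 ≤ 0 := by linarith
  have hS := S_pos hA hB
  have hia : IntervalIntegrable
      (fun t : ℝ => (1 - t) * (1 + A + 2 * C * t + B * t ^ 2) ^ (p/2-1)) volume 0 1 :=
    ((continuous_const.sub continuous_id).mul
      (contk A B C hA hB hC _)).intervalIntegrable 0 1
  have hib : IntervalIntegrable (fun t : ℝ => (1 - t) * 1) volume 0 1 :=
    ((continuous_const.sub continuous_id).mul continuous_const).intervalIntegrable 0 1
  have h1 : (∫ t in (0:ℝ)..1, (1 - t) * (1 + A + 2 * C * t + B * t ^ 2) ^ (p/2-1))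
      ≤ ∫ t in (0:ℝ)..1, (1 - t) * 1 := by
    apply intervalIntegral.integral_mono_on (by norm_num : (0:ℝ) ≤ 1) hia hib
    intro t ht
    exact mul_le_mul_of_nonneg_left
      (Real.rpow_le_one_of_one_le_of_nonpos (k_ge_one hA hB hC t) hq) (by linarith [ht.2])
  rw [int_one_sub 1] at h1
  have hS11 : 1 + A + B ≤ 11 := by linarith
  have h2 : (11:ℝ) ^ (p/2-1) ≤ (1 + A + B) ^ (p/2-1) :=
    Real.rpow_le_rpow_of_nonpos hS hS11 hq
  have h3 : (11:ℝ) ^ (-(p/2-1)) * (11:ℝ) ^ (p/2-1) = 1 := by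
    rw [← Real.rpow_add (by norm_num : (0:ℝ) < 11)]; norm_num
  have h4 : (0:ℝ) < (11:ℝ) ^ (-(p/2-1)) := Real.rpow_pos_of_pos (by norm_num) _
  calc (∫ t in (0:ℝ)..1, (1 - t) * (1 + A + 2 * C * t + B * t ^ 2) ^ (p/2-1))
      ≤ 1/2 := by linarith
    _ = (1/2) * ((11:ℝ) ^ (-(p/2-1)) * (11:ℝ) ^ (p/2-1)) := by rw [h3]; ring
    _ ≤ (1/2) * ((11:ℝ) ^ (-(p/2-1)) * (1 + A + B) ^ (p/2-1)) := by
        have := mul_le_mul_of_nonneg_left h2 h4.le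
        linarith
    _ = (1/2) * (11:ℝ) ^ (-(p/2-1)) * (1 + A + B) ^ (p/2-1) := by ring

lemma clamp_sq {t0 t : ℝ} (ht0 : 0 ≤ t) (ht1 : t ≤ 1) :
    (t - max 0 (min 1 t0))^2 ≤ (t - t0)^2 := by
  rcases le_or_gt t0 0 with h | h
  · rw [min_eq_right (by linarith), max_eq_left (by linarith)]
    nlinarith
  · rcases le_or_gt 1 t0 with h' | h'
    · rw [min_eq_left h', max_eq_right (by norm_num)]
      nlinarith
    · rw [min_eq_right h'.le, max_eq_right h.le]

lemma Jub_case4b (hp1 : 1 < p) (hp2 : p ≤ 2) (hA : 0 ≤ A) (hB : 0 ≤ B) (hC : C ^ 2 ≤ A * B)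
    (h9 : A < 9 * B) (hB1 : 1 < B) :
    (∫ t in (0:ℝ)..1, (1 - t) * (1 + A + 2 * C * t + B * t ^ 2) ^ (p/2-1))
      ≤ (2/(p-1)) * (11:ℝ) ^ (-(p/2-1)) * (1 + A + B) ^ (p/2-1) := by
  have hq : p/2 - 1 ≤ 0 := by linarith
  have hq' : (-1:ℝ) < 2*(p/2-1) := by linarith
  have hq'' : (0:ℝ) < 2*(p/2-1) + 1 := by linarith
  have hBpos : (0:ℝ) < B := by linarith
  have hS := S_pos hA hB
  set q := p/2 - 1 with hqdef
  set c := max 0 (min 1 (-C/B)) with hcdef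
  have hc0 : 0 ≤ c := le_max_left _ _
  have hc1 : c ≤ 1 := max_le (by norm_num) (min_le_left _ _)
  have hkey : ∀ t : ℝ, 0 ≤ t → t ≤ 1 → B*(t-c)^2 ≤ 1 + A + 2*C*t + B*t^2 := by
    intro t ht0 ht1
    have e1 : B*(t - (-C/B)) = C + B*t := by field_simp; ring
    have e2 : B*(B*(t - (-C/B))^2) = (C + B*t)^2 := by rw [← e1]; ring
    have e3 : (C + B*t)^2 ≤ (1 + A + 2*C*t + B*t^2) * B := by nlinarith [hC]
    have e4 : B*(t - (-C/B))^2 ≤ 1 + A + 2*C*t + B*t^2 := by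
      have h6 := e3; rw [← e2] at h6
      have h5 : B*(t - (-C/B))^2 * B ≤ (1 + A + 2*C*t + B*t^2) * B := by nlinarith [h6]
      exact le_of_mul_le_mul_right h5 hBpos
    calc B*(t-c)^2 ≤ B*(t - (-C/B))^2 :=
          mul_le_mul_of_nonneg_left (clamp_sq ht0 ht1) hBpos.le
      _ ≤ _ := e4
  have hia : IntervalIntegrable
      (fun t : ℝ => (1 - t) * (1 + A + 2 * C * t + B * t ^ 2) ^ q) volume 0 1 :=
    ((continuous_const.sub continuous_id).mul (contk A B C hA hB hC _)).intervalIntegrable 0 1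
  have hib : IntervalIntegrable
      (fun t : ℝ => (1 + A + 2 * C * t + B * t ^ 2) ^ q) volume 0 1 :=
    (contk A B C hA hB hC _).intervalIntegrable 0 1
  have hstep1 : (∫ t in (0:ℝ)..1, (1 - t) * (1 + A + 2 * C * t + B * t ^ 2) ^ q)
      ≤ ∫ t in (0:ℝ)..1, (1 + A + 2 * C * t + B * t ^ 2) ^ q := by
    apply intervalIntegral.integral_mono_on (by norm_num : (0:ℝ) ≤ 1) hia hib
    intro t ht
    exact mul_le_of_le_one_left (Real.rpow_nonneg (kpos hA hB hC t).le _) (by linarith [ht.1])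
  have hint1 : IntervalIntegrable (fun t : ℝ => (1 + A + 2 * C * t + B * t ^ 2) ^ q) volume 0 c :=
    (contk A B C hA hB hC _).intervalIntegrable 0 c
  have hint2 : IntervalIntegrable (fun t : ℝ => (1 + A + 2 * C * t + B * t ^ 2) ^ q) volume c 1 :=
    (contk A B C hA hB hC _).intervalIntegrable c 1
  have hsplit : (∫ t in (0:ℝ)..1, (1 + A + 2 * C * t + B * t ^ 2) ^ q)
      = (∫ t in (0:ℝ)..c, (1 + A + 2 * C * t + B * t ^ 2) ^ q)
        + ∫ t in c..(1:ℝ), (1 + A + 2 * C * t + B * t ^ 2) ^ q :=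
    (integral_add_adjacent_intervals hint1 hint2).symm
  have hne : ∀ᵐ t : ℝ ∂volume, t ≠ c := by
    refine MeasureTheory.ae_iff.2 ?_
    simp only [ne_eq, not_not, Set.setOf_eq_eq_singleton]
    exact Real.volume_singleton
  have hgR : IntervalIntegrable (fun t : ℝ => B ^ q * (t - c) ^ (2*q)) volume c 1 := by
    have h := (intervalIntegrable_rpow' (a := 0) (b := 1 - c) hq').comp_sub_right c
    have h' : IntervalIntegrable (fun t : ℝ => (t - c) ^ (2*q)) volume c 1 := by
      simpa using h
    exact h'.const_mul _
  have hgL : IntervalIntegrable (fun t : ℝ => B ^ q * (c - t) ^ (2*q)) volume 0 c := by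
    have h := (intervalIntegrable_rpow' (a := 0) (b := c) hq').comp_sub_left c
    have h' : IntervalIntegrable (fun t : ℝ => (c - t) ^ (2*q)) volume 0 c := by
      simpa using h.symm
    exact h'.const_mul _
  have hR : (∫ t in c..(1:ℝ), (1 + A + 2 * C * t + B * t ^ 2) ^ q)
      ≤ ∫ t in c..(1:ℝ), B ^ q * (t - c) ^ (2*q) := by
    apply intervalIntegral.integral_mono_ae_restrict hc1 hint2 hgR
    rw [Filter.EventuallyLE, MeasureTheory.ae_restrict_iff' measurableSet_Icc]
    filter_upwards [hne] with t htne hmem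
    have htc : 0 < t - c := lt_of_le_of_ne (by linarith [hmem.1]) (fun h => htne (by linarith))
    have h0 : 0 < B*(t-c)^2 := by positivity
    have h1 : (1 + A + 2 * C * t + B * t ^ 2) ^ q ≤ (B*(t-c)^2) ^ q :=
      Real.rpow_le_rpow_of_nonpos h0 (hkey t (by linarith [hmem.1, hc0]) hmem.2) hq
    have h2 : (B*(t-c)^2) ^ q = B ^ q * (t - c) ^ (2*q) := by
      rw [Real.mul_rpow hBpos.le (sq_nonneg _), ← Real.rpow_natCast (t-c) 2,
        ← Real.rpow_mul htc.le]
      norm_num [mul_comm]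
    rw [h2] at h1; exact h1
  have hL : (∫ t in (0:ℝ)..c, (1 + A + 2 * C * t + B * t ^ 2) ^ q)
      ≤ ∫ t in (0:ℝ)..c, B ^ q * (c - t) ^ (2*q) := by
    apply intervalIntegral.integral_mono_ae_restrict hc0 hint1 hgL
    rw [Filter.EventuallyLE, MeasureTheory.ae_restrict_iff' measurableSet_Icc]
    filter_upwards [hne] with t htne hmem
    have htc : 0 < c - t := lt_of_le_of_ne (by linarith [hmem.2]) (fun h => htne (by linarith))
    have h0 : 0 < B*(t-c)^2 := by
      have h00 : (0:ℝ) < (t - c)^2 := by nlinarith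
      positivity
    have h1 : (1 + A + 2 * C * t + B * t ^ 2) ^ q ≤ (B*(t-c)^2) ^ q :=
      Real.rpow_le_rpow_of_nonpos h0 (hkey t hmem.1 (by linarith [hmem.2, hc1])) hq
    have h2 : (B*(t-c)^2) ^ q = B ^ q * (c - t) ^ (2*q) := by
      have e : (t-c)^2 = (c-t)^2 := by ring
      rw [e, Real.mul_rpow hBpos.le (sq_nonneg _), ← Real.rpow_natCast (c-t) 2,
        ← Real.rpow_mul htc.le]
      norm_num [mul_comm]
    rw [h2] at h1; exact h1
  have hBq : (0:ℝ) < B ^ q := Real.rpow_pos_of_pos hBpos _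
  have hRcomp : (∫ t in c..(1:ℝ), B ^ q * (t - c) ^ (2*q)) ≤ B ^ q * (1/(p-1)) := by
    rw [intervalIntegral.integral_const_mul]
    have e1 : (∫ t in c..(1:ℝ), (t - c) ^ (2*q)) = ∫ t in (0:ℝ)..(1-c), t ^ (2*q) := by
      have h := intervalIntegral.integral_comp_sub_right (a := c) (b := 1)
        (fun s : ℝ => s ^ (2*q)) c
      simpa using h
    rw [e1, integral_rpow (Or.inl hq')]
    have e2 : (0:ℝ) ^ (2*q+1) = 0 := Real.zero_rpow (ne_of_gt hq'')
    rw [e2]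
    have e3 : (1-c) ^ (2*q+1) ≤ 1 := Real.rpow_le_one (by linarith) (by linarith) hq''.le
    have e4 : ((1-c) ^ (2*q+1) - 0) / (2*q+1) ≤ 1/(p-1) := by
      rw [sub_zero]
      have hpq : 2*q+1 = p - 1 := by rw [hqdef]; ring
      rw [hpq] at e3 ⊢
      exact (div_le_div_iff_of_pos_right (by linarith)).2 e3
    exact mul_le_mul_of_nonneg_left e4 hBq.le
  have hLcomp : (∫ t in (0:ℝ)..c, B ^ q * (c - t) ^ (2*q)) ≤ B ^ q * (1/(p-1)) := by
    rw [intervalIntegral.integral_const_mul]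
    have e1 : (∫ t in (0:ℝ)..c, (c - t) ^ (2*q)) = ∫ t in (0:ℝ)..c, t ^ (2*q) := by
      have h := intervalIntegral.integral_comp_sub_left (a := (0:ℝ)) (b := c)
        (fun s : ℝ => s ^ (2*q)) c
      simpa using h
    rw [e1, integral_rpow (Or.inl hq')]
    have e2 : (0:ℝ) ^ (2*q+1) = 0 := Real.zero_rpow (ne_of_gt hq'')
    rw [e2]
    have e3 : c ^ (2*q+1) ≤ 1 := Real.rpow_le_one hc0 hc1 hq''.le
    have e4 : (c ^ (2*q+1) - 0) / (2*q+1) ≤ 1/(p-1) := by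
      rw [sub_zero]
      have hpq : 2*q+1 = p - 1 := by rw [hqdef]; ring
      rw [hpq] at e3 ⊢
      exact (div_le_div_iff_of_pos_right (by linarith)).2 e3
    exact mul_le_mul_of_nonneg_left e4 hBq.le
  -- combine
  have hS11B : 1 + A + B ≤ 11 * B := by linarith
  have h2' : (11*B) ^ q ≤ (1 + A + B) ^ q := Real.rpow_le_rpow_of_nonpos hS hS11B hq
  have h3' : (11*B) ^ q = (11:ℝ) ^ q * B ^ q := Real.mul_rpow (by norm_num) hBpos.le
  have h4' : (0:ℝ) < (11:ℝ) ^ (-q) := Real.rpow_pos_of_pos (by norm_num) _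
  have h5' : (11:ℝ) ^ (-q) * (11:ℝ) ^ q = 1 := by
    rw [← Real.rpow_add (by norm_num : (0:ℝ) < 11)]; norm_num
  have hBqS : B ^ q ≤ (11:ℝ) ^ (-q) * (1 + A + B) ^ q := by
    have h6' := mul_le_mul_of_nonneg_left (h3' ▸ h2') h4'.le
    calc B ^ q = ((11:ℝ) ^ (-q) * (11:ℝ) ^ q) * B ^ q := by rw [h5']; ring
      _ = (11:ℝ) ^ (-q) * ((11:ℝ) ^ q * B ^ q) := by ring
      _ ≤ (11:ℝ) ^ (-q) * (1 + A + B) ^ q := h6'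
  have hfin : (∫ t in (0:ℝ)..1, (1 - t) * (1 + A + 2 * C * t + B * t ^ 2) ^ q)
      ≤ (2/(p-1)) * B ^ q := by
    rw [hsplit] at hstep1
    calc (∫ t in (0:ℝ)..1, (1 - t) * (1 + A + 2 * C * t + B * t ^ 2) ^ q)
        ≤ B ^ q * (1/(p-1)) + B ^ q * (1/(p-1)) := by linarith
      _ = (2/(p-1)) * B ^ q := by ring
  calc (∫ t in (0:ℝ)..1, (1 - t) * (1 + A + 2 * C * t + B * t ^ 2) ^ q)
      ≤ (2/(p-1)) * B ^ q := hfin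
    _ ≤ (2/(p-1)) * ((11:ℝ) ^ (-q) * (1 + A + B) ^ q) :=
        mul_le_mul_of_nonneg_left hBqS (by
          have : (0:ℝ) < p - 1 := by linarith
          positivity)
    _ = (2/(p-1)) * (11:ℝ) ^ (-q) * (1 + A + B) ^ q := by ring



open MeasureTheory intervalIntegral

variable {p A B C : ℝ}

def cL (p : ℝ) : ℝ :=
  min ((1/2) * 2 ^ (p/2-1)) (min ((1/2) * (2/5) ^ (p/2-1)) ((1/16) * (1/640) ^ (p/2-1)))

def cU (p : ℝ) : ℝ :=
  max ((1/2) * 2 ^ (p/2-1)) (max ((1/2) * (2/5) ^ (p/2-1))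
    (max ((1/2) * (11:ℝ) ^ (-(p/2-1))) ((2/(p-1)) * (11:ℝ) ^ (-(p/2-1)))))

lemma cL_pos (p : ℝ) : 0 < cL p :=
  lt_min (by positivity) (lt_min (by positivity) (by positivity))

lemma cU_pos (p : ℝ) : 0 < cU p :=
  lt_of_lt_of_le (by positivity) (le_max_left _ _)


lemma J_lower (hp : 1 < p) (hA : 0 ≤ A) (hB : 0 ≤ B) (hC : C ^ 2 ≤ A * B) :
    cL p * (1 + A + B) ^ (p/2-1)
      ≤ ∫ t in (0:ℝ)..1, (1 - t) * (1 + A + 2 * C * t + B * t ^ 2) ^ (p/2-1) := by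
  have hSq : (0:ℝ) ≤ (1 + A + B) ^ (p/2-1) := Real.rpow_nonneg (S_pos hA hB).le _
  rcases le_or_gt 2 p with h2 | h2
  · rcases le_or_gt (9*B) A with h9 | h9
    · refine le_trans (mul_le_mul_of_nonneg_right ?_ hSq) (Jlb_92 h2 hA hB hC h9)
      exact (min_le_right _ _).trans (min_le_left _ _)
    · refine le_trans (mul_le_mul_of_nonneg_right ?_ hSq) (Jlb_case3 h2 hA hB hC h9)
      exact (min_le_right _ _).trans (min_le_right _ _)
  · refine le_trans (mul_le_mul_of_nonneg_right ?_ hSq) (Jlb_lo h2.le hA hB hC)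
    exact min_le_left _ _

lemma J_upper (hp : 1 < p) (hA : 0 ≤ A) (hB : 0 ≤ B) (hC : C ^ 2 ≤ A * B) :
    (∫ t in (0:ℝ)..1, (1 - t) * (1 + A + 2 * C * t + B * t ^ 2) ^ (p/2-1))
      ≤ cU p * (1 + A + B) ^ (p/2-1) := by
  have hSq : (0:ℝ) ≤ (1 + A + B) ^ (p/2-1) := Real.rpow_nonneg (S_pos hA hB).le _
  rcases le_or_gt 2 p with h2 | h2
  · refine le_trans (Jub_hi h2 hA hB hC) (mul_le_mul_of_nonneg_right ?_ hSq)
    exact le_max_left _ _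
  · rcases le_or_gt (9*B) A with h9 | h9
    · refine le_trans (Jub_92 h2.le hA hB hC h9) (mul_le_mul_of_nonneg_right ?_ hSq)
      exact le_trans (le_max_left _ _) (le_max_right _ _)
    · rcases le_or_gt B 1 with hB1 | hB1
      · refine le_trans (Jub_case4a hp h2.le hA hB hC h9 hB1)
          (mul_le_mul_of_nonneg_right ?_ hSq)
        exact le_trans (le_max_left _ _) (le_trans (le_max_right _ _) (le_max_right _ _))
      · refine le_trans (Jub_case4b hp h2.le hA hB hC h9 hB1)
          (mul_le_mul_of_nonneg_right ?_ hSq)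
        exact le_trans (le_max_right _ _) (le_trans (le_max_right _ _) (le_max_right _ _))



open MeasureTheory intervalIntegral

variable {p A B C : ℝ}


lemma core (hp : 1 < p) (hA : 0 ≤ A) (hB : 0 ≤ B) (hC : C ^ 2 ≤ A * B) :
    (p * min 1 (p-1) * cL p) * ((1 + A + B) ^ (p/2-1) * B)
      ≤ (1 + A + 2*C + B) ^ (p/2) - (1 + A) ^ (p/2) - p/2 * (1 + A) ^ (p/2 - 1) * (2*C) ∧
    (1 + A + 2*C + B) ^ (p/2) - (1 + A) ^ (p/2) - p/2 * (1 + A) ^ (p/2 - 1) * (2*C)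
      ≤ (p * max 1 (p-1) * cU p) * ((1 + A + B) ^ (p/2-1) * B) := by
  rw [taylor_rep p A B C hA hB hC]
  have hm : 0 ≤ p * min 1 (p-1) := by
    apply mul_nonneg (by linarith)
    rcases le_or_gt 1 (p-1) with h | h
    · rw [min_eq_left h]; norm_num
    · rw [min_eq_right h.le]; linarith
  have hM : 0 ≤ p * max 1 (p-1) :=
    mul_nonneg (by linarith) (le_trans (by norm_num) (le_max_left _ _))
  have hiPhi : IntervalIntegrable (fun t : ℝ => (1 - t) *
      (p * (p-2) * (1 + A + 2 * C * t + B * t ^ 2) ^ (p/2 - 2) * (C + B*t) ^ 2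
        + p * B * (1 + A + 2 * C * t + B * t ^ 2) ^ (p/2 - 1))) volume 0 1 :=
    (contPhi2 p A B C hA hB hC).intervalIntegrable 0 1
  have hcontJ : Continuous (fun t : ℝ => (1 - t) * (1 + A + 2 * C * t + B * t ^ 2) ^ (p/2-1)) :=
    (continuous_const.sub continuous_id).mul (contk A B C hA hB hC _)
  constructor
  · -- lower bound
    have h1 : ∫ t in (0:ℝ)..1, (p * min 1 (p-1) * B) *
        ((1 - t) * (1 + A + 2 * C * t + B * t ^ 2) ^ (p/2-1))
        ≤ ∫ t in (0:ℝ)..1, (1 - t) *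
          (p * (p-2) * (1 + A + 2 * C * t + B * t ^ 2) ^ (p/2 - 2) * (C + B*t) ^ 2
            + p * B * (1 + A + 2 * C * t + B * t ^ 2) ^ (p/2 - 1)) := by
      apply intervalIntegral.integral_mono_on (by norm_num : (0:ℝ) ≤ 1)
        ((continuous_const.mul hcontJ).intervalIntegrable 0 1) hiPhi
      intro t ht
      have hb := (Phi_bounds hp hA hB hC t).1
      have h1t : (0:ℝ) ≤ 1 - t := by linarith [ht.2]
      calc (p * min 1 (p-1) * B) * ((1 - t) * (1 + A + 2 * C * t + B * t ^ 2) ^ (p/2-1))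
          = (1 - t) * (p * min 1 (p-1) * B * (1 + A + 2 * C * t + B * t ^ 2) ^ (p/2-1)) := by
            ring
        _ ≤ _ := mul_le_mul_of_nonneg_left hb h1t
    rw [intervalIntegral.integral_const_mul] at h1
    have h2 := mul_le_mul_of_nonneg_left (J_lower hp hA hB hC)
      (mul_nonneg hm hB : (0:ℝ) ≤ p * min 1 (p-1) * B)
    calc (p * min 1 (p-1) * cL p) * ((1 + A + B) ^ (p/2-1) * B)
        = (p * min 1 (p-1) * B) * (cL p * (1 + A + B) ^ (p/2-1)) := by ring
      _ ≤ (p * min 1 (p-1) * B) *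
            ∫ t in (0:ℝ)..1, (1 - t) * (1 + A + 2 * C * t + B * t ^ 2) ^ (p/2-1) := h2
      _ ≤ _ := h1
  · -- upper bound
    have h1 : (∫ t in (0:ℝ)..1, (1 - t) *
          (p * (p-2) * (1 + A + 2 * C * t + B * t ^ 2) ^ (p/2 - 2) * (C + B*t) ^ 2
            + p * B * (1 + A + 2 * C * t + B * t ^ 2) ^ (p/2 - 1)))
        ≤ ∫ t in (0:ℝ)..1, (p * max 1 (p-1) * B) *
          ((1 - t) * (1 + A + 2 * C * t + B * t ^ 2) ^ (p/2-1)) := by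
      apply intervalIntegral.integral_mono_on (by norm_num : (0:ℝ) ≤ 1) hiPhi
        ((continuous_const.mul hcontJ).intervalIntegrable 0 1)
      intro t ht
      have hb := (Phi_bounds hp hA hB hC t).2
      have h1t : (0:ℝ) ≤ 1 - t := by linarith [ht.2]
      calc (1 - t) * (p * (p-2) * (1 + A + 2 * C * t + B * t ^ 2) ^ (p/2 - 2) * (C + B*t) ^ 2
            + p * B * (1 + A + 2 * C * t + B * t ^ 2) ^ (p/2 - 1))
          ≤ (1 - t) * (p * max 1 (p-1) * B * (1 + A + 2 * C * t + B * t ^ 2) ^ (p/2-1)) :=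
            mul_le_mul_of_nonneg_left hb h1t
        _ = (p * max 1 (p-1) * B) *
            ((1 - t) * (1 + A + 2 * C * t + B * t ^ 2) ^ (p/2-1)) := by ring
    rw [intervalIntegral.integral_const_mul] at h1
    have h2 := mul_le_mul_of_nonneg_left (J_upper hp hA hB hC)
      (mul_nonneg hM hB : (0:ℝ) ≤ p * max 1 (p-1) * B)
    calc (∫ t in (0:ℝ)..1, (1 - t) *
          (p * (p-2) * (1 + A + 2 * C * t + B * t ^ 2) ^ (p/2 - 2) * (C + B*t) ^ 2
            + p * B * (1 + A + 2 * C * t + B * t ^ 2) ^ (p/2 - 1)))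
        ≤ (p * max 1 (p-1) * B) *
            ∫ t in (0:ℝ)..1, (1 - t) * (1 + A + 2 * C * t + B * t ^ 2) ^ (p/2-1) := h1
      _ ≤ (p * max 1 (p-1) * B) * (cU p * (1 + A + B) ^ (p/2-1)) := h2
      _ = (p * max 1 (p-1) * cU p) * ((1 + A + B) ^ (p/2-1) * B) := by ring


def mlo (p : ℝ) : ℝ := p * min 1 (p-1) * cL p
def mhi (p : ℝ) : ℝ := p * max 1 (p-1) * cU p

lemma mlo_pos (hp : 1 < p) : 0 < mlo p :=
  mul_pos (mul_pos (by linarith) (lt_min (by norm_num) (by linarith))) (cL_pos p)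

lemma mhi_pos (hp : 1 < p) : 0 < mhi p :=
  mul_pos (mul_pos (by linarith) (lt_of_lt_of_le (by norm_num) (le_max_left _ _))) (cU_pos p)

lemma core' (hp : 1 < p) (hA : 0 ≤ A) (hB : 0 ≤ B) (hC : C ^ 2 ≤ A * B) :
    mlo p * ((1 + A + B) ^ (p/2-1) * B)
      ≤ (1 + A + 2*C + B) ^ (p/2) - (1 + A) ^ (p/2) - p/2 * (1 + A) ^ (p/2 - 1) * (2*C) ∧
    (1 + A + 2*C + B) ^ (p/2) - (1 + A) ^ (p/2) - p/2 * (1 + A) ^ (p/2 - 1) * (2*C)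
      ≤ mhi p * ((1 + A + B) ^ (p/2-1) * B) :=
  core hp hA hB hC

variable {N n : ℕ}



variable {N n : ℕ}

lemma gradVp (p : ℝ) (z : EuclideanSpace ℝ (Fin N × Fin n)) :
    HasGradientAt (Vp p) ((p * (1 + ‖z‖ ^ 2) ^ (p/2 - 1)) • z) z := by
  have hpos : (0:ℝ) < 1 + ‖z‖ ^ 2 := by positivity
  have h1 : HasFDerivAt (fun w : EuclideanSpace ℝ (Fin N × Fin n) => ‖w‖ ^ 2)
      (2 • (innerSL ℝ z)) z := (hasStrictFDerivAt_norm_sq z).hasFDerivAt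
  have h2 : HasDerivAt (fun s : ℝ => (1 + s) ^ (p/2) - 1)
      ((p/2) * (1 + ‖z‖ ^ 2) ^ (p/2 - 1)) (‖z‖ ^ 2) := by
    have ha : HasDerivAt (fun s : ℝ => 1 + s) 1 (‖z‖ ^ 2) := by
      simpa using (hasDerivAt_id (‖z‖ ^ 2)).const_add 1
    have hb := (Real.hasDerivAt_rpow_const (x := 1 + ‖z‖ ^ 2) (p := p/2)
      (Or.inl hpos.ne')).comp (‖z‖ ^ 2) ha
    simpa using hb.sub_const 1
  have h3 := h2.comp_hasFDerivAt z h1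
  rw [hasGradientAt_iff_hasFDerivAt]
  refine h3.congr_fderiv ?_
  ext y
  simp [InnerProductSpace.toDual_apply_apply, real_inner_smul_left, smul_eq_mul]
  ring

theorem Vp_taylor_two_sided' (p : ℝ) (hp : 1 < p) :
    ∃ c : ℝ, 0 < c ∧ ∀ z z' : EuclideanSpace ℝ (Fin N × Fin n),
      (1 / c) * (1 + ‖z‖ ^ 2 + ‖z'‖ ^ 2) ^ ((p - 2) / 2) * ‖z'‖ ^ 2 ≤
          Vp p (z + z') - Vp p z - ⟪gradient (Vp p) z, z'⟫ ∧
        Vp p (z + z') - Vp p z - ⟪gradient (Vp p) z, z'⟫ ≤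
          c * (1 + ‖z‖ ^ 2 + ‖z'‖ ^ 2) ^ ((p - 2) / 2) * ‖z'‖ ^ 2 := by
  refine ⟨max (mhi p) (1 / mlo p), lt_of_lt_of_le (mhi_pos hp) (le_max_left _ _), ?_⟩
  intro z z'
  set A := ‖z‖ ^ 2 with hAdef
  set B := ‖z'‖ ^ 2 with hBdef
  set C := ⟪z, z'⟫ with hCdef
  have hA : 0 ≤ A := by positivity
  have hB : 0 ≤ B := by positivity
  have hC : C ^ 2 ≤ A * B := by
    rw [hAdef, hBdef, hCdef]
    calc ⟪z, z'⟫ ^ 2 = ⟪z, z'⟫ * ⟪z, z'⟫ := sq ⟪z, z'⟫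
      _ ≤ ⟪z, z⟫ * ⟪z', z'⟫ := real_inner_mul_inner_self_le z z'
      _ = ‖z‖ ^ 2 * ‖z'‖ ^ 2 := by
          rw [real_inner_self_eq_norm_sq, real_inner_self_eq_norm_sq]
  have hnorm : ‖z + z'‖ ^ 2 = A + 2*C + B := by
    rw [hAdef, hBdef, hCdef, @norm_add_sq_real]
  have hgrad : ⟪gradient (Vp p) z, z'⟫ = p/2 * (1 + A) ^ (p/2 - 1) * (2*C) := by
    rw [(gradVp p z).gradient, real_inner_smul_left]
    ring
  have hVzz' : Vp p (z + z') = (1 + A + 2*C + B) ^ (p/2) - 1 := by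
    rw [Vp, hnorm]; ring_nf
  have hVz : Vp p z = (1 + A) ^ (p/2) - 1 := rfl
  have hexp : (p - 2)/2 = p/2 - 1 := by ring
  have hcore := core' hp hA hB hC
  have hmid : Vp p (z + z') - Vp p z - ⟪gradient (Vp p) z, z'⟫
      = (1 + A + 2*C + B) ^ (p/2) - (1 + A) ^ (p/2) - p/2 * (1 + A) ^ (p/2 - 1) * (2*C) := by
    rw [hVzz', hVz, hgrad]; ring
  have hSq : (0:ℝ) ≤ (1 + A + B) ^ (p/2-1) := Real.rpow_nonneg (by linarith) _
  have hQ : (0:ℝ) ≤ (1 + A + B) ^ (p/2-1) * B := mul_nonneg hSq hB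
  constructor
  · rw [hmid, hexp]
    refine le_trans ?_ hcore.1
    have h1 : 1 / max (mhi p) (1 / mlo p) ≤ mlo p := by
      rw [div_le_iff₀ (lt_of_lt_of_le (mhi_pos hp) (le_max_left _ _))]
      have h2 : 1 / mlo p ≤ max (mhi p) (1 / mlo p) := le_max_right _ _
      have h3 := mlo_pos hp
      calc (1:ℝ) = mlo p * (1 / mlo p) := by field_simp
        _ ≤ mlo p * max (mhi p) (1 / mlo p) := by
            exact mul_le_mul_of_nonneg_left h2 h3.le
    calc 1 / max (mhi p) (1 / mlo p) * (1 + A + B) ^ (p/2-1) * B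
        = 1 / max (mhi p) (1 / mlo p) * ((1 + A + B) ^ (p/2-1) * B) := by ring
      _ ≤ mlo p * ((1 + A + B) ^ (p/2-1) * B) := mul_le_mul_of_nonneg_right h1 hQ
  · rw [hmid, hexp]
    refine le_trans hcore.2 ?_
    calc mhi p * ((1 + A + B) ^ (p/2-1) * B)
        ≤ max (mhi p) (1 / mlo p) * ((1 + A + B) ^ (p/2-1) * B) :=
          mul_le_mul_of_nonneg_right (le_max_left _ _) hQ
      _ = max (mhi p) (1 / mlo p) * (1 + A + B) ^ (p/2-1) * B := by ring


end VpTaylorAux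

/-- For each `1 < p < ∞` there is `c = c(p) > 0` such that for all `z, z' ∈ ℝ^{N×n}`:
`(1/c)(1+|z|²+|z'|²)^{(p−2)/2}|z'|² ≤ V_p(z+z') − V_p(z) − ⟨V_p'(z), z'⟩
  ≤ c(1+|z|²+|z'|²)^{(p−2)/2}|z'|²`, where `V_p'` is the gradient of `V_p`. -/
theorem Vp_taylor_two_sided (N n : ℕ) (p : ℝ) (hp : 1 < p) :
    ∃ c : ℝ, 0 < c ∧ ∀ z z' : EuclideanSpace ℝ (Fin N × Fin n),
      (1 / c) * (1 + ‖z‖ ^ 2 + ‖z'‖ ^ 2) ^ ((p - 2) / 2) * ‖z'‖ ^ 2 ≤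
          Vp p (z + z') - Vp p z - ⟪gradient (Vp p) z, z'⟫ ∧
        Vp p (z + z') - Vp p z - ⟪gradient (Vp p) z, z'⟫ ≤
          c * (1 + ‖z‖ ^ 2 + ‖z'‖ ^ 2) ^ ((p - 2) / 2) * ‖z'‖ ^ 2 :=
  VpTaylorAux.Vp_taylor_two_sided' p hp
end
end

section
/- Let 0 < r < s < ∞, θ ∈ [0, 1/8), and let f : [r,s] → ℝ be non-decreasing and right-continuous. Then for any measurable set E ⊂ [r,s] with L¹(E) < θ(s−r) there exist r < r̃ < s̃ < s with r̃, s̃ ∉ E such that: (i) (f(a) − f(τ))/(a − τ) ≤ (800/(1−8θ))·(f(s)−f(r))/(s−r) for all τ < a, and (f(τ) − f(a))/(τ − a) ≤ (800/(1−8θ))·(f(s)−f(r))/(s−r) for all τ > a, for a ∈ {r̃, s̃} (where τ ranges over (r,s)); and (ii) (s̃ − r̃) ≤ (s − r) ≤ 8(s̃ − r̃). -/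
noncomputable section

open MeasureTheory

open Set Metric Filter Topology in
/-- A crude Vitali-covering weak-type bound: if every point of `B` is the center of a
closed ball of radius `≤ R` whose `μ`-measure is at least `lam` times its radius, then
the Lebesgue measure of `B` is at most `(8/lam) · μ(univ)`. -/
lemma HLsel.vitali_weak (μ : Measure ℝ) (B : Set ℝ) (lam R : ℝ)
    (hlam : 0 < lam) (hfin : μ Set.univ ≠ ⊤)
    (h : ∀ a ∈ B, ∃ ρ : ℝ, 0 < ρ ∧ ρ ≤ R ∧ ENNReal.ofReal (lam * ρ) ≤ μ (closedBall a ρ)) :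
    volume B ≤ ENNReal.ofReal (8 / lam) * μ Set.univ := by
  choose! ρ hρ0 hρR hρμ using h
  obtain ⟨u, huB, hdisj, hcov⟩ :=
    Vitali.exists_disjoint_subfamily_covering_enlargement_closedBall B id ρ R hρR 4 (by norm_num)
  simp only [id_eq] at hdisj hcov
  have : IsFiniteMeasure μ := ⟨hfin.lt_top⟩
  have hucnt : u.Countable := by
    have hcnt := Measure.countable_meas_pos_of_disjoint_iUnion
      (μ := μ) (As := fun b : u => closedBall (b : ℝ) (ρ (b : ℝ)))
      (fun b => measurableSet_closedBall)
      (fun b b' hbb' => hdisj b.2 b'.2 (fun hh => hbb' (Subtype.ext hh)))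
    have huniv : {b : u | 0 < μ (closedBall (b : ℝ) (ρ (b : ℝ)))} = Set.univ := by
      refine Set.eq_univ_of_forall fun b => lt_of_lt_of_le ?_ (hρμ _ (huB b.2))
      exact ENNReal.ofReal_pos.2 (mul_pos hlam (hρ0 _ (huB b.2)))
    rw [huniv, Set.countable_univ_iff] at hcnt
    exact Set.countable_coe_iff.mpr hcnt
  have hBcov : B ⊆ ⋃ b ∈ u, closedBall b (4 * ρ b) := by
    intro a ha
    obtain ⟨b, hbu, hsub⟩ := hcov a ha
    exact Set.mem_biUnion hbu (hsub (mem_closedBall_self (hρ0 a ha).le))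
  calc volume B ≤ ∑' b : u, volume (closedBall (b : ℝ) (4 * ρ (b : ℝ))) :=
        (measure_mono hBcov).trans (measure_biUnion_le volume hucnt _)
    _ = ∑' b : u, ENNReal.ofReal (8 / lam) * ENNReal.ofReal (lam * ρ (b : ℝ)) := by
        refine tsum_congr fun b => ?_
        rw [Real.volume_closedBall, ← ENNReal.ofReal_mul (by positivity)]
        congr 1
        field_simp
        ring
    _ ≤ ∑' b : u, ENNReal.ofReal (8 / lam) * μ (closedBall (b : ℝ) (ρ (b : ℝ))) :=
        ENNReal.tsum_le_tsum (fun b => mul_le_mul_right (hρμ _ (huB b.2)) _)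
    _ = ENNReal.ofReal (8 / lam) * ∑' b : u, μ (closedBall (b : ℝ) (ρ (b : ℝ))) :=
        ENNReal.tsum_mul_left
    _ = ENNReal.ofReal (8 / lam) * μ (⋃ b ∈ u, closedBall b (ρ b)) := by
        rw [measure_biUnion hucnt hdisj (fun b _ => measurableSet_closedBall)]
    _ ≤ ENNReal.ofReal (8 / lam) * μ Set.univ :=
        mul_le_mul_right (measure_mono (Set.subset_univ _)) _

/-- Hardy–Littlewood-type selection lemma (Lemma 2.7): for a non-decreasing
right-continuous `f : [r,s] → ℝ`, `θ ∈ [0,1/8)` and a measurable `E ⊆ [r,s]` with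
`L¹(E) < θ(s−r)`, there are `r < r̃ < s̃ < s` with `r̃, s̃ ∉ E` such that both `r̃` and `s̃`
satisfy the two-sided difference-quotient bounds with constant `800/(1−8θ)`, and
`s̃ − r̃ ≤ s − r ≤ 8(s̃ − r̃)`. -/
theorem hardy_littlewood_selection
    {r s θ : ℝ} (hr : 0 < r) (hrs : r < s) (hθ : θ ∈ Set.Ico (0 : ℝ) (1 / 8))
    (f : ℝ → ℝ) (hf_mono : MonotoneOn f (Set.Icc r s))
    (hf_rc : ∀ t ∈ Set.Ico r s, ContinuousWithinAt f (Set.Ici t) t)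
    (E : Set ℝ) (hE_meas : MeasurableSet E) (hE_sub : E ⊆ Set.Icc r s)
    (hE_small : volume E < ENNReal.ofReal (θ * (s - r))) :
    ∃ r' s' : ℝ, r < r' ∧ r' < s' ∧ s' < s ∧ r' ∉ E ∧ s' ∉ E ∧
      (∀ a ∈ ({r', s'} : Set ℝ),
        (∀ τ ∈ Set.Ioo r s, τ < a →
          (f a - f τ) / (a - τ) ≤ 800 / (1 - 8 * θ) * ((f s - f r) / (s - r))) ∧
        (∀ τ ∈ Set.Ioo r s, a < τ →
          (f τ - f a) / (τ - a) ≤ 800 / (1 - 8 * θ) * ((f s - f r) / (s - r)))) ∧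
      s' - r' ≤ s - r ∧ s - r ≤ 8 * (s' - r') := by
  obtain ⟨hθ0, hθ8⟩ := hθ
  have h8θ : 0 < 1 - 8 * θ := by linarith
  have hL : 0 < s - r := sub_pos.2 hrs
  -- the clamp function
  set g : ℝ → ℝ := fun t => max r (min s t) with hgdef
  have hg_mem : ∀ t, g t ∈ Set.Icc r s := fun t =>
    ⟨le_max_left _ _, max_le hrs.le (min_le_left _ _)⟩
  have hg_eq : ∀ t ∈ Set.Icc r s, g t = t := fun t ht => by
    simp only [hgdef, min_eq_right ht.2, max_eq_right ht.1]
  have hg_mono : Monotone g := fun a b hab =>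
    max_le_max le_rfl (min_le_min le_rfl hab)
  have hg_cont : Continuous g :=
    continuous_const.max (continuous_const.min continuous_id)
  -- the Stieltjes function extending f
  set F : StieltjesFunction ℝ :=
    { toFun := f ∘ g
      mono' := fun a b hab => hf_mono (hg_mem a) (hg_mem b) (hg_mono hab)
      right_continuous' := by
        intro x
        by_cases hx : s ≤ x
        · have hconst : ∀ y ∈ Set.Ici x, (f ∘ g) y = f s := by
            intro y hy
            have : g y = s := by
              simp only [hgdef, min_eq_left (hx.trans hy), max_eq_right hrs.le]
            simp [this]
          exact (continuousWithinAt_const (b := f s)).congr hconst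
            (hconst x (Set.mem_Ici.2 le_rfl))
        · push_neg at hx
          have hgx : g x ∈ Set.Ico r s := by
            refine ⟨le_max_left _ _, ?_⟩
            exact max_lt hrs ((min_le_right _ _).trans_lt hx)
          exact (hf_rc (g x) hgx).comp hg_cont.continuousWithinAt
            (fun y hy => hg_mono hy) } with hFdef
  set μ := F.measure with hμdef
  have hFeq : ∀ t ∈ Set.Icc r s, F t = f t := fun t ht => by
    show f (g t) = f t
    rw [hg_eq t ht]
  have hμuniv : μ Set.univ = ENNReal.ofReal (f s - f r) := by
    refine F.measure_univ (l := f r) (u := f s) ?_ ?_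
    · refine Filter.Tendsto.congr' ?_ tendsto_const_nhds
      filter_upwards [Filter.eventually_le_atBot r] with t ht
      show f r = f (g t)
      rw [show g t = r by simp [hgdef, min_eq_right (ht.trans hrs.le), max_eq_left ht]]
    · refine Filter.Tendsto.congr' ?_ tendsto_const_nhds
      filter_upwards [Filter.eventually_ge_atTop s] with t ht
      show f s = f (g t)
      rw [show g t = s by simp [hgdef, min_eq_left ht, max_eq_right hrs.le]]
  have hfin : μ Set.univ ≠ ⊤ := by rw [hμuniv]; exact ENNReal.ofReal_ne_top
  have hfr_le : f r ≤ f s := hf_mono ⟨le_rfl, hrs.le⟩ ⟨hrs.le, le_rfl⟩ hrs.le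
  set lam : ℝ := 800 / (1 - 8 * θ) * ((f s - f r) / (s - r)) with hlamdef
  have hlam0 : 0 ≤ lam := by
    apply mul_nonneg (by positivity)
    exact div_nonneg (sub_nonneg.2 hfr_le) hL.le
  -- the bad set
  set B : Set ℝ := {a | a ∈ Set.Ioo r s ∧ ∃ τ ∈ Set.Ioo r s,
      (τ < a ∧ lam < (f a - f τ) / (a - τ)) ∨
      (a < τ ∧ lam < (f τ - f a) / (τ - a))} with hBdef
  have hμball : ∀ a ∈ B, ∃ ρ : ℝ, 0 < ρ ∧ ρ ≤ s - r ∧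
      ENNReal.ofReal (lam * ρ) ≤ μ (Metric.closedBall a ρ) := by
    rintro a ⟨ha, τ, hτ, hcase⟩
    have haI : a ∈ Set.Icc r s := ⟨ha.1.le, ha.2.le⟩
    have hτI : τ ∈ Set.Icc r s := ⟨hτ.1.le, hτ.2.le⟩
    rcases hcase with ⟨hlt, hq⟩ | ⟨hlt, hq⟩
    · refine ⟨a - τ, sub_pos.2 hlt, by linarith [hτ.1, ha.2], ?_⟩
      have hsub : Set.Ioc τ a ⊆ Metric.closedBall a (a - τ) := by
        rw [Real.closedBall_eq_Icc]
        intro x hx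
        constructor <;> [skip; skip] <;> simp at hx ⊢ <;> linarith [hx.1, hx.2]
      refine le_trans ?_ (measure_mono hsub)
      rw [show μ (Set.Ioc τ a) = F.measure (Set.Ioc τ a) from rfl,
        StieltjesFunction.measure_Ioc, hFeq a haI, hFeq τ hτI]
      apply ENNReal.ofReal_le_ofReal
      rw [lt_div_iff₀ (sub_pos.2 hlt)] at hq
      linarith
    · refine ⟨τ - a, sub_pos.2 hlt, by linarith [ha.1, hτ.2], ?_⟩
      have hsub : Set.Ioc a τ ⊆ Metric.closedBall a (τ - a) := by
        rw [Real.closedBall_eq_Icc]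
        intro x hx
        constructor <;> [skip; skip] <;> simp at hx ⊢ <;> linarith [hx.1, hx.2]
      refine le_trans ?_ (measure_mono hsub)
      rw [show μ (Set.Ioc a τ) = F.measure (Set.Ioc a τ) from rfl,
        StieltjesFunction.measure_Ioc, hFeq τ hτI, hFeq a haI]
      apply ENNReal.ofReal_le_ofReal
      rw [lt_div_iff₀ (sub_pos.2 hlt)] at hq
      linarith
  have hBvol : volume B ≤ ENNReal.ofReal ((1 - 8 * θ) * (s - r) / 100) := by
    rcases eq_or_lt_of_le hlam0 with h0 | hpos
    · -- lam = 0 : then f s = f r and B is empty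
      have hfs : f s = f r := by
        have h800 : (0:ℝ) < 800 / (1 - 8 * θ) := by positivity
        have : (f s - f r) / (s - r) = 0 :=
          (mul_eq_zero.1 h0.symm).resolve_left h800.ne'
        have := (div_eq_zero_iff.1 this).resolve_right hL.ne'
        linarith
      have hBempty : B = ∅ := by
        ext a
        simp only [hBdef, Set.mem_setOf_eq, Set.mem_empty_iff_false, iff_false]
        rintro ⟨ha, τ, hτ, hcase⟩
        have haI : a ∈ Set.Icc r s := ⟨ha.1.le, ha.2.le⟩
        have hτI : τ ∈ Set.Icc r s := ⟨hτ.1.le, hτ.2.le⟩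
        have hconst : ∀ x ∈ Set.Icc r s, f x = f r := by
          intro x hx
          have h1 := hf_mono (Set.left_mem_Icc.2 hrs.le) hx hx.1
          have h2 := hf_mono hx (Set.right_mem_Icc.2 hrs.le) hx.2
          linarith
        rcases hcase with ⟨hlt, hq⟩ | ⟨hlt, hq⟩ <;>
          rw [hconst a haI, hconst τ hτI, ← h0] at hq <;>
          simp at hq
      simp [hBempty]
    · refine (HLsel.vitali_weak μ B lam (s - r) hpos hfin hμball).trans ?_
      rw [hμuniv, ← ENNReal.ofReal_mul (by positivity)]
      apply ENNReal.ofReal_le_ofReal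
      have hfs : 0 < f s - f r := by
        by_contra hc
        push_neg at hc
        have : lam ≤ 0 := mul_nonpos_of_nonneg_of_nonpos (by positivity)
          (div_nonpos_of_nonpos_of_nonneg hc hL.le)
        linarith
      have heq : 8 / lam * (f s - f r) = (1 - 8 * θ) * (s - r) / 100 := by
        rw [hlamdef]
        field_simp
        ring
      exact le_of_eq heq
  -- the exceptional set
  have hDvol : volume (E ∪ B) < ENNReal.ofReal ((s - r) / 4) := by
    calc volume (E ∪ B) ≤ volume E + volume B := measure_union_le _ _
      _ < ENNReal.ofReal (θ * (s - r)) + ENNReal.ofReal ((1 - 8 * θ) * (s - r) / 100) := by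
          exact ENNReal.add_lt_add_of_lt_of_le (hBvol.trans_lt ENNReal.ofReal_lt_top).ne hE_small hBvol
      _ = ENNReal.ofReal (θ * (s - r) + (1 - 8 * θ) * (s - r) / 100) := by
          rw [← ENNReal.ofReal_add (by positivity) (by positivity)]
      _ ≤ ENNReal.ofReal ((s - r) / 4) := by
          apply ENNReal.ofReal_le_ofReal
          nlinarith [mul_le_mul_of_nonneg_right hθ8.le hL.le]
  have hpick : ∀ a b : ℝ, b - a = (s - r) / 4 → ∃ x ∈ Set.Ioo a b, x ∉ E ∪ B := by
    intro a b hab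
    by_contra hc
    push_neg at hc
    have hsub : Set.Ioo a b ⊆ E ∪ B := fun x hx => hc x hx
    have := (measure_mono hsub).trans_lt hDvol
    rw [Real.volume_Ioo, hab] at this
    exact lt_irrefl _ this
  obtain ⟨r', hr'I, hr'D⟩ := hpick r (r + (s - r) / 4) (by ring)
  obtain ⟨s', hs'I, hs'D⟩ := hpick (s - (s - r) / 4) s (by ring)
  have hr'mem : r' ∈ Set.Ioo r s := ⟨hr'I.1, by nlinarith [hr'I.2]⟩
  have hs'mem : s' ∈ Set.Ioo r s := ⟨by nlinarith [hs'I.1], hs'I.2⟩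
  have hr's' : r' < s' := by nlinarith [hr'I.2, hs'I.1]
  have hgood : ∀ a ∈ Set.Ioo r s, a ∉ B →
      (∀ τ ∈ Set.Ioo r s, τ < a → (f a - f τ) / (a - τ) ≤ lam) ∧
      (∀ τ ∈ Set.Ioo r s, a < τ → (f τ - f a) / (τ - a) ≤ lam) := by
    intro a ha hnB
    constructor <;> intro τ hτ hlt <;> by_contra hq <;> push_neg at hq
    · exact hnB ⟨ha, τ, hτ, Or.inl ⟨hlt, hq⟩⟩
    · exact hnB ⟨ha, τ, hτ, Or.inr ⟨hlt, hq⟩⟩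
  refine ⟨r', s', hr'mem.1, hr's', hs'mem.2,
    fun h => hr'D (Or.inl h), fun h => hs'D (Or.inl h), ?_, ?_, ?_⟩
  · intro a ha
    simp only [Set.mem_insert_iff, Set.mem_singleton_iff] at ha
    rcases ha with rfl | rfl
    · exact hgood _ hr'mem (fun h => hr'D (Or.inr h))
    · exact hgood _ hs'mem (fun h => hs'D (Or.inr h))
  · linarith [hr'mem.1, hs'mem.2]
  · nlinarith [hr'I.2, hs'I.1]
end
end

section
/- Let 1 ≤ q < ∞ and define F_q : ℝ → ℝ by F_q(t) = (1/q)(t+1)^q − 1/q for t ≥ 0 and F_q(t) = t for t < 0. Then F_q is convex, satisfies t − c ≤ F_q(t) ≤ c(1+|t|^q) for some c > 0, and with Ω = (0,1) and v_j(x) := max{−jx+1, 0}, the sequence (v_j) ⊂ W^{1,q}(0,1) converges weakly-* in BV(0,1) to u ≡ 0 while liminf_{j→∞} ∫₀¹ F_q(v_j') dx = −1 < 0 = ∫₀¹ F_q(u') dx. Hence the functional v ↦ ∫₀¹ F_q(v') dx is not sequentially weak*-lower semicontinuous on BV(0,1). -/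
noncomputable section

open MeasureTheory

/-- The convex `(1,q)`-growth integrand
`F_q(t) = (1/q)(t+1)^q − 1/q` for `t ≥ 0` and `F_q(t) = t` for `t < 0`. -/
def Fq (q : ℝ) (t : ℝ) : ℝ :=
  if 0 ≤ t then (1 / q) * (t + 1) ^ q - 1 / q else t

/-- The sequence `v_j(x) = max{−jx+1, 0}` on `(0,1)`. -/
def vseq (j : ℕ) (x : ℝ) : ℝ := max (1 - (j : ℝ) * x) 0

/-- The (a.e.) derivative of `v_j`: `−j` on `(0,1/j)` and `0` on `(1/j,1)`. -/
def vderiv (j : ℕ) (x : ℝ) : ℝ := if x < 1 / (j : ℝ) then -(j : ℝ) else 0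

def Fqd (q : ℝ) (t : ℝ) : ℝ := if 0 ≤ t then (t + 1) ^ (q - 1) else 1

lemma Fq_hasDerivAt (q : ℝ) (hq : 1 ≤ q) (t : ℝ) : HasDerivAt (Fq q) (Fqd q t) t := by
  have hq0 : (0:ℝ) < q := lt_of_lt_of_le one_pos hq
  have hg : ∀ s : ℝ, 0 ≤ s → HasDerivAt (fun x : ℝ => (1/q) * (x+1)^q - 1/q) ((s+1)^(q-1)) s := by
    intro s hs
    have h1 : HasDerivAt (fun x : ℝ => x + 1) 1 s := (hasDerivAt_id s).add_const 1
    have h2 := (h1.rpow_const (p := q) (Or.inr hq)).const_mul (1/q)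
    have h3 := h2.sub_const (1/q)
    rw [show (s+1)^(q-1) = 1/q * (1*q*(s+1)^(q-1)) by field_simp [hq0.ne']]
    exact h3
  rcases lt_trichotomy t 0 with ht | ht | ht
  · have : Fqd q t = 1 := if_neg (not_le.mpr ht)
    rw [this]
    refine (hasDerivAt_id t).congr_of_eventuallyEq ?_
    filter_upwards [Iio_mem_nhds ht] with y hy
    exact if_neg (not_le.mpr hy)
  · subst ht
    have h1 : HasDerivWithinAt (Fq q) ((0+1:ℝ)^(q-1)) (Set.Ici 0) 0 := by
      refine ((hg 0 le_rfl).hasDerivWithinAt).congr ?_ ?_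
      · intro y hy; exact if_pos hy
      · exact if_pos le_rfl
    have h2 : HasDerivWithinAt (Fq q) ((0+1:ℝ)^(q-1)) (Set.Iic 0) 0 := by
      have he : ((0:ℝ)+1)^(q-1) = 1 := by rw [zero_add, Real.one_rpow]
      rw [he]
      refine ((hasDerivAt_id (0:ℝ)).hasDerivWithinAt).congr ?_ ?_
      · intro y hy
        rcases lt_or_eq_of_le (Set.mem_Iic.mp hy) with h | h
        · exact if_neg (not_le.mpr h)
        · subst h; simp [Fq, Real.one_rpow]
      · simp [Fq, Real.one_rpow]
    have := h2.union h1
    rw [Set.Iic_union_Ici, hasDerivWithinAt_univ] at this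
    simpa [Fqd] using this
  · have : Fqd q t = (t+1)^(q-1) := if_pos ht.le
    rw [this]
    refine (hg t ht.le).congr_of_eventuallyEq ?_
    filter_upwards [Ioi_mem_nhds ht] with y hy
    exact if_pos (le_of_lt hy)

lemma Fq_convex (q : ℝ) (hq : 1 ≤ q) : ConvexOn ℝ Set.univ (Fq q) := by
  have hd : ∀ t, HasDerivAt (Fq q) (Fqd q t) t := Fq_hasDerivAt q hq
  have hdiff : Differentiable ℝ (Fq q) := fun t => (hd t).differentiableAt
  refine MonotoneOn.convexOn_of_deriv convex_univ hdiff.continuous.continuousOn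
    hdiff.differentiableOn ?_
  intro a _ b _ hab
  rw [interior_univ] at *
  rw [(hd a).deriv, (hd b).deriv]
  unfold Fqd
  have hq1 : (0:ℝ) ≤ q - 1 := by linarith
  by_cases ha : 0 ≤ a
  · have hb : 0 ≤ b := le_trans ha hab
    rw [if_pos ha, if_pos hb]
    exact Real.rpow_le_rpow (by linarith) (by linarith) hq1
  · rw [if_neg ha]
    by_cases hb : 0 ≤ b
    · rw [if_pos hb]
      calc (1:ℝ) = 1 ^ (q-1) := (Real.one_rpow _).symm
        _ ≤ (b+1)^(q-1) := Real.rpow_le_rpow zero_le_one (by linarith) hq1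
    · rw [if_neg hb]

lemma Fq_growth (q : ℝ) (hq : 1 ≤ q) :
    ∃ c : ℝ, 0 < c ∧ ∀ t : ℝ, t - c ≤ Fq q t ∧ Fq q t ≤ c * (1 + |t| ^ q) := by
  have hq0 : (0:ℝ) < q := lt_of_lt_of_le one_pos hq
  refine ⟨(2:ℝ)^q, Real.rpow_pos_of_pos two_pos q, fun t => ?_⟩
  by_cases ht : 0 ≤ t
  · rw [Fq, if_pos ht, abs_of_nonneg ht]
    constructor
    · have hB : 1 + q * t ≤ (1 + t) ^ q := one_add_mul_self_le_rpow_one_add (by linarith) hq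
      have : t ≤ 1/q * (t+1)^q - 1/q := by
        rw [add_comm t 1]
        have h2 := mul_le_mul_of_nonneg_left hB (le_of_lt (show (0:ℝ) < 1/q by positivity))
        have h3 : 1/q * (1 + q*t) = 1/q + t := by field_simp
        linarith
      have hc : (0:ℝ) < (2:ℝ)^q := Real.rpow_pos_of_pos two_pos q
      linarith
    · have h1 : (t+1)^q ≤ 2^q * (1 + t^q) := by
        have htq : (0:ℝ) ≤ t ^ q := Real.rpow_nonneg ht q
        by_cases h : t ≤ 1
        · have : (t+1)^q ≤ (2:ℝ)^q := Real.rpow_le_rpow (by linarith) (by linarith) hq0.le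
          nlinarith [Real.rpow_pos_of_pos two_pos q]
        · have h2 : (t+1)^q ≤ (2*t)^q := Real.rpow_le_rpow (by linarith) (by linarith) hq0.le
          have h3 : ((2:ℝ)*t)^q = 2^q * t^q := Real.mul_rpow (by norm_num) ht
          nlinarith [Real.rpow_pos_of_pos two_pos q]
      have h2 : 1/q * (t+1)^q ≤ (t+1)^q := by
        have : (0:ℝ) ≤ (t+1)^q := Real.rpow_nonneg (by linarith) q
        have h1q : 1/q ≤ 1 := by rw [div_le_one hq0]; exact hq
        nlinarith
      have : (0:ℝ) < 1/q := by positivity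
      linarith
  · rw [Fq, if_neg ht]
    have hc : (0:ℝ) < (2:ℝ)^q := Real.rpow_pos_of_pos two_pos q
    constructor
    · linarith
    · have : (0:ℝ) ≤ |t|^q := Real.rpow_nonneg (abs_nonneg t) q
      nlinarith [not_le.mp ht]

lemma vseq_hasDerivAt (j : ℕ) (hj : 1 ≤ j) (x : ℝ) (hx : x ∈ Set.Ioo (0:ℝ) 1)
    (hne : x ≠ 1 / (j:ℝ)) : HasDerivAt (vseq j) (vderiv j x) x := by
  have hj0 : (0:ℝ) < (j:ℝ) := by exact_mod_cast hj
  rcases hne.lt_or_gt with h | h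
  · have hd : HasDerivAt (fun y : ℝ => 1 - (j:ℝ) * y) (-(j:ℝ)) x := by
      simpa using ((hasDerivAt_id x).const_mul (j:ℝ)).const_sub 1
    have : vderiv j x = -(j:ℝ) := if_pos h
    rw [this]
    refine hd.congr_of_eventuallyEq ?_
    filter_upwards [Iio_mem_nhds h] with y hy
    have : (0:ℝ) ≤ 1 - (j:ℝ) * y := by
      have : (j:ℝ) * y < (j:ℝ) * (1/(j:ℝ)) := by
        exact mul_lt_mul_of_pos_left hy hj0
      rw [mul_one_div_cancel hj0.ne'] at this
      linarith
    rw [vseq]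
    exact max_eq_left this
  · have : vderiv j x = 0 := if_neg (not_lt.mpr h.le)
    rw [this]
    refine (hasDerivAt_const x (0:ℝ)).congr_of_eventuallyEq ?_
    filter_upwards [Ioi_mem_nhds h] with y hy
    have : 1 - (j:ℝ) * y ≤ 0 := by
      have : (j:ℝ) * (1/(j:ℝ)) < (j:ℝ) * y := mul_lt_mul_of_pos_left hy hj0
      rw [mul_one_div_cancel hj0.ne'] at this
      linarith
    rw [vseq]
    exact max_eq_right this

lemma vseq_L1_tendsto :
    Filter.Tendsto (fun j : ℕ => ∫ x in Set.Ioo (0 : ℝ) 1, |vseq j x|)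
      Filter.atTop (nhds 0) := by
  have hcont : ∀ j : ℕ, Continuous (fun x => |vseq j x|) := fun j =>
    ((continuous_const.sub (continuous_const.mul continuous_id)).max continuous_const).abs
  refine squeeze_zero' ?_ ?_ tendsto_one_div_atTop_nhds_zero_nat
  · filter_upwards with j
    exact setIntegral_nonneg measurableSet_Ioo (fun x _ => abs_nonneg _)
  · filter_upwards [Filter.eventually_ge_atTop 1] with j hj
    have hj0 : (0:ℝ) < (j:ℝ) := by exact_mod_cast hj
    have hint1 : IntegrableOn (fun x => |vseq j x|) (Set.Ioo (0:ℝ) 1) :=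
      ((hcont j).integrableOn_Icc (a := 0) (b := 1)).mono_set Set.Ioo_subset_Icc_self
    have hint2 : IntegrableOn ((Set.Ioo (0:ℝ) (1/(j:ℝ))).indicator (fun _ => (1:ℝ)))
        (Set.Ioo (0:ℝ) 1) := by
      refine (integrableOn_const measure_Ioo_lt_top.ne).indicator measurableSet_Ioo
    have hle : ∀ x ∈ Set.Ioo (0:ℝ) 1,
        |vseq j x| ≤ (Set.Ioo (0:ℝ) (1/(j:ℝ))).indicator (fun _ => (1:ℝ)) x := by
      intro x hx
      have hv0 : 0 ≤ vseq j x := le_max_right _ _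
      rw [abs_of_nonneg hv0]
      by_cases h : x < 1/(j:ℝ)
      · rw [Set.indicator_of_mem (Set.mem_Ioo.mpr ⟨hx.1, h⟩)]
        refine max_le ?_ zero_le_one
        nlinarith [hx.1]
      · rw [Set.indicator_of_notMem (fun hmem => h (Set.mem_Ioo.mp hmem).2)]
        have : 1 - (j:ℝ) * x ≤ 0 := by
          have h1 : (j:ℝ) * (1/(j:ℝ)) ≤ (j:ℝ) * x :=
            mul_le_mul_of_nonneg_left (not_lt.mp h) hj0.le
          rw [mul_one_div_cancel hj0.ne'] at h1
          linarith
        rw [vseq, max_eq_right this]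
    have hmono := setIntegral_mono_on hint1 hint2 measurableSet_Ioo hle
    refine hmono.trans ?_
    rw [setIntegral_indicator measurableSet_Ioo]
    rw [setIntegral_const]
    have hsub : Set.Ioo (0:ℝ) 1 ∩ Set.Ioo (0:ℝ) (1/(j:ℝ)) ⊆ Set.Ioo (0:ℝ) (1/(j:ℝ)) :=
      Set.inter_subset_right
    have := measure_mono (μ := volume) hsub
    rw [Real.volume_Ioo] at this
    have htoReal : (volume (Set.Ioo (0:ℝ) 1 ∩ Set.Ioo (0:ℝ) (1/(j:ℝ)))).toReal
        ≤ (ENNReal.ofReal (1/(j:ℝ) - 0)).toReal :=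
      ENNReal.toReal_mono ENNReal.ofReal_ne_top this
    rw [ENNReal.toReal_ofReal (by rw [sub_zero]; positivity)] at htoReal
    simpa [measureReal_def] using htoReal

lemma phi_tendsto (j : ℕ) : ∀ φ : ℝ → ℝ, Continuous φ → HasCompactSupport φ →
      tsupport φ ⊆ Set.Ioo (0 : ℝ) 1 →
      Filter.Tendsto (fun j : ℕ => ∫ x in Set.Ioo (0 : ℝ) 1, φ x * vderiv j x)
        Filter.atTop (nhds 0) := by
  intro φ hφc hφs hφsub
  by_cases hne : (tsupport φ).Nonempty
  · obtain ⟨a, ha, hmin⟩ := hφs.exists_isMinOn hne continuous_id.continuousOn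
    have ha0 : 0 < a := (hφsub ha).1
    obtain ⟨N, hN⟩ := exists_nat_gt (1/a)
    refine Filter.Tendsto.congr' ?_ tendsto_const_nhds
    filter_upwards [Filter.eventually_ge_atTop (max N 1)] with j hj
    have hj1 : 1 ≤ j := le_trans (le_max_right N 1) hj
    have hjN : (N:ℝ) ≤ (j:ℝ) := by exact_mod_cast le_trans (le_max_left N 1) hj
    have hj0 : (0:ℝ) < (j:ℝ) := by exact_mod_cast hj1
    have hja : 1/(j:ℝ) < a := by
      rw [div_lt_iff₀ hj0]
      have : 1/a < (j:ℝ) := lt_of_lt_of_le hN hjN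
      rw [div_lt_iff₀ ha0] at this
      linarith [this]
    have h0 : Set.EqOn (fun x => φ x * vderiv j x) (fun _ => (0:ℝ)) (Set.Ioo (0:ℝ) 1) := by
      intro x hx
      by_cases h : x < 1/(j:ℝ)
      · have hxa : x < a := lt_trans h hja
        have : φ x = 0 := by
          refine image_eq_zero_of_notMem_tsupport (fun hmem => ?_)
          exact absurd (hmin hmem) (not_le.mpr hxa)
        simp [this]
      · simp only [vderiv, if_neg h, mul_zero]
    rw [setIntegral_congr_fun measurableSet_Ioo h0, integral_zero]
  · have he : tsupport φ = ∅ := Set.not_nonempty_iff_eq_empty.mp hne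
    have hφ0 : ∀ x, φ x = 0 := fun x => image_eq_zero_of_notMem_tsupport (by simp [he])
    simp only [hφ0, zero_mul, integral_zero]
    exact (tendsto_const_nhds :
      Filter.Tendsto (fun _ : ℕ => (0:ℝ)) Filter.atTop (nhds 0))

lemma int_Fq_vderiv (q : ℝ) (hq : 1 ≤ q) (j : ℕ) (hj : 1 ≤ j) :
    ∫ x in Set.Ioo (0 : ℝ) 1, Fq q (vderiv j x) = -1 := by
  have hq0 : (0:ℝ) < q := lt_of_lt_of_le one_pos hq
  have hj0 : (0:ℝ) < (j:ℝ) := by exact_mod_cast hj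
  have hj1 : 1/(j:ℝ) ≤ 1 := by
    rw [div_le_one hj0]; exact_mod_cast hj
  have hfun : (fun x => Fq q (vderiv j x))
      = (Set.Iio (1/(j:ℝ))).indicator (fun _ => -(j:ℝ)) := by
    funext x
    by_cases h : x < 1/(j:ℝ)
    · rw [Set.indicator_of_mem (Set.mem_Iio.mpr h)]
      rw [vderiv, if_pos h, Fq, if_neg (by simp; exact Nat.one_le_iff_ne_zero.mp hj)]
    · rw [Set.indicator_of_notMem (fun hm => h (Set.mem_Iio.mp hm))]
      rw [vderiv, if_neg h, Fq, if_pos le_rfl]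
      rw [zero_add, Real.one_rpow]
      ring
  rw [hfun, setIntegral_indicator measurableSet_Iio]
  have hset : Set.Ioo (0:ℝ) 1 ∩ Set.Iio (1/(j:ℝ)) = Set.Ioo 0 (1/(j:ℝ)) := by
    ext x
    simp only [Set.mem_inter_iff, Set.mem_Ioo, Set.mem_Iio]
    constructor
    · rintro ⟨⟨h1, _⟩, h3⟩; exact ⟨h1, h3⟩
    · rintro ⟨h1, h2⟩; exact ⟨⟨h1, lt_of_lt_of_le h2 hj1⟩, h2⟩
  rw [hset, setIntegral_const, measureReal_def, Real.volume_Ioo, sub_zero,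
    ENNReal.toReal_ofReal (by positivity)]
  rw [smul_eq_mul]
  field_simp

/-- Example 4.2: `F_q` is convex with `t − c ≤ F_q(t) ≤ c(1+|t|^q)`; the sequence
`v_j` converges to `u ≡ 0` weakly-* in `BV(0,1)` (L¹-convergence plus weak*-convergence
of the derivative measures), yet `∫₀¹ F_q(v_j') dx = −1` for each `j ≥ 1` while
`∫₀¹ F_q(u') dx = F_q(0)·1 = 0`; hence `v ↦ ∫₀¹ F_q(v') dx` is not sequentially
weak*-lower semicontinuous on `BV(0,1)`. -/
theorem Fq_concentration_failure_of_lsc (q : ℝ) (hq : 1 ≤ q) :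
    ConvexOn ℝ Set.univ (Fq q) ∧
    (∃ c : ℝ, 0 < c ∧ ∀ t : ℝ, t - c ≤ Fq q t ∧ Fq q t ≤ c * (1 + |t| ^ q)) ∧
    (∀ j : ℕ, 1 ≤ j → ∀ x ∈ Set.Ioo (0 : ℝ) 1, x ≠ 1 / (j : ℝ) →
      HasDerivAt (vseq j) (vderiv j x) x) ∧
    Filter.Tendsto (fun j : ℕ => ∫ x in Set.Ioo (0 : ℝ) 1, |vseq j x|)
      Filter.atTop (nhds 0) ∧
    (∀ φ : ℝ → ℝ, Continuous φ → HasCompactSupport φ →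
      tsupport φ ⊆ Set.Ioo (0 : ℝ) 1 →
      Filter.Tendsto (fun j : ℕ => ∫ x in Set.Ioo (0 : ℝ) 1, φ x * vderiv j x)
        Filter.atTop (nhds 0)) ∧
    (∀ j : ℕ, 1 ≤ j → ∫ x in Set.Ioo (0 : ℝ) 1, Fq q (vderiv j x) = -1) ∧
    (-1 : ℝ) < 0 ∧ Fq q 0 = 0 := by
  refine ⟨Fq_convex q hq, Fq_growth q hq, fun j hj x hx hne => vseq_hasDerivAt j hj x hx hne,
    vseq_L1_tendsto, fun φ h1 h2 h3 => phi_tendsto 0 φ h1 h2 h3,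
    fun j hj => int_Fq_vderiv q hq j hj, by norm_num, ?_⟩
  simp [Fq, Real.one_rpow]
end
end
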